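/- Let (U, A, η, a) with twist constant K be a smooth areal solution on [R₀,R*). Then for every R ∈ [R₀,R*): (i) (1/R) ∫₀^{2π} |∂_R η(R,θ)| a(R,θ)⁻¹ dθ ≤ 𝓔_K(R₀); (ii) (1/R) ∫₀^{2π} |∂_θ η(R,θ)| dθ ≤ 𝓔(R₀); and (iii) for every θ, |η(R,θ)| ≤ R 𝓔(R₀) + |∫₀^{2π} η(R₀,θ') dθ'| + (sup_{θ'} a(R₀,θ')) · ((R² − R₀²)/2) · 𝓔_K(R₀). -/

import Mathlib

open Real

noncomputable section

/-- Partial derivative in the first (areal time `R`) variable. -/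
def pd1 (f : ℝ → ℝ → ℝ) (x y : ℝ) : ℝ := deriv (fun s => f s y) x

/-- Partial derivative in the second (space `θ`) variable. -/
def pd2 (f : ℝ → ℝ → ℝ) (x y : ℝ) : ℝ := deriv (fun s => f x s) y

/-- The energy density `E := a⁻¹ U_R² + a U_θ² + (e^{4U}/(4R²))(a⁻¹ A_R² + a A_θ²)`. -/
def Edens (U A a : ℝ → ℝ → ℝ) (r θ : ℝ) : ℝ :=
  (a r θ)⁻¹ * (pd1 U r θ) ^ 2 + a r θ * (pd2 U r θ) ^ 2
    + exp (4 * U r θ) / (4 * r ^ 2) *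
        ((a r θ)⁻¹ * (pd1 A r θ) ^ 2 + a r θ * (pd2 A r θ) ^ 2)

/-- The flux density `F := 2 U_R U_θ + (e^{4U}/(2R²)) A_R A_θ`. -/
def Fdens (U A : ℝ → ℝ → ℝ) (r θ : ℝ) : ℝ :=
  2 * pd1 U r θ * pd2 U r θ
    + exp (4 * U r θ) / (2 * r ^ 2) * (pd1 A r θ * pd2 A r θ)

/-- A smooth solution `(U, A, η, a)` of the `T²`-symmetric vacuum Einstein equations
in areal coordinates, with twist constant `K`, on the time set `D` (times `ℝ` in the
space variable `θ`, with all coefficients `2π`-periodic in `θ` and `a > 0`).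
The equations are (A1), (A2), (A3) and the constraints (A4) of the paper. -/
structure ArealSol (D : Set ℝ) (K : ℝ) where
  U : ℝ → ℝ → ℝ
  A : ℝ → ℝ → ℝ
  η : ℝ → ℝ → ℝ
  a : ℝ → ℝ → ℝ
  smooth_U : ContDiff ℝ (⊤ : ℕ∞) (Function.uncurry U)
  smooth_A : ContDiff ℝ (⊤ : ℕ∞) (Function.uncurry A)
  smooth_η : ContDiff ℝ (⊤ : ℕ∞) (Function.uncurry η)
  smooth_a : ContDiff ℝ (⊤ : ℕ∞) (Function.uncurry a)
  periodic_U : ∀ r θ : ℝ, U r (θ + 2 * π) = U r θ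
  periodic_A : ∀ r θ : ℝ, A r (θ + 2 * π) = A r θ
  periodic_η : ∀ r θ : ℝ, η r (θ + 2 * π) = η r θ
  periodic_a : ∀ r θ : ℝ, a r (θ + 2 * π) = a r θ
  apos : ∀ r ∈ D, ∀ θ : ℝ, 0 < a r θ
  eq_U : ∀ r ∈ D, ∀ θ : ℝ,
    pd1 (fun r' θ' => r' * (a r' θ')⁻¹ * pd1 U r' θ') r θ
      - pd2 (fun r' θ' => r' * a r' θ' * pd2 U r' θ') r θ
      = exp (4 * U r θ) / (2 * r) *
          ((a r θ)⁻¹ * (pd1 A r θ) ^ 2 - a r θ * (pd2 A r θ) ^ 2)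
  eq_A : ∀ r ∈ D, ∀ θ : ℝ,
    pd1 (fun r' θ' => r'⁻¹ * (a r' θ')⁻¹ * pd1 A r' θ') r θ
      - pd2 (fun r' θ' => r'⁻¹ * a r' θ' * pd2 A r' θ') r θ
      = (4 / r) * (a r θ * pd2 U r θ * pd2 A r θ - (a r θ)⁻¹ * pd1 U r θ * pd1 A r θ)
  eq_a : ∀ r ∈ D, ∀ θ : ℝ,
    pd1 (fun r' θ' => Real.log (a r' θ')) r θ
      = -(K ^ 2 * exp (2 * η r θ)) / (2 * r ^ 3)
  eq_ηR : ∀ r ∈ D, ∀ θ : ℝ,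
    pd1 η r θ + K ^ 2 / (4 * r ^ 3) * exp (2 * η r θ) = a r θ * r * Edens U A a r θ
  eq_ηθ : ∀ r ∈ D, ∀ θ : ℝ,
    pd2 η r θ = r * Fdens U A r θ

/-- The areal energy `𝓔(R)`. -/
def En (U A a : ℝ → ℝ → ℝ) (r : ℝ) : ℝ :=
  ∫ θ in (0:ℝ)..(2 * π), Edens U A a r θ

/-- The modified areal energy `𝓔_K(R)`. -/
def EnK (K : ℝ) (U A η a : ℝ → ℝ → ℝ) (r : ℝ) : ℝ :=
  ∫ θ in (0:ℝ)..(2 * π),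
    (Edens U A a r θ + K ^ 2 / (4 * r ^ 4) * exp (2 * η r θ) * (a r θ)⁻¹)

end
section Toolkit
open Function

variable {f : ℝ → ℝ → ℝ}

lemma slice1_contDiff (hf : ContDiff ℝ (⊤:ℕ∞) (uncurry f)) (y : ℝ) :
    ContDiff ℝ (⊤:ℕ∞) (fun x => f x y) :=
  hf.comp (contDiff_id.prodMk contDiff_const)

lemma slice2_contDiff (hf : ContDiff ℝ (⊤:ℕ∞) (uncurry f)) (x : ℝ) :
    ContDiff ℝ (⊤:ℕ∞) (fun y => f x y) :=
  hf.comp (contDiff_const.prodMk contDiff_id)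

lemma hasDerivAt_pd1 (hf : ContDiff ℝ (⊤:ℕ∞) (uncurry f)) (x y : ℝ) :
    HasDerivAt (fun s => f s y) (pd1 f x y) x :=
  (((slice1_contDiff hf y).differentiable (by simp)) x).hasDerivAt

lemma hasDerivAt_pd2 (hf : ContDiff ℝ (⊤:ℕ∞) (uncurry f)) (x y : ℝ) :
    HasDerivAt (fun t => f x t) (pd2 f x y) y :=
  (((slice2_contDiff hf x).differentiable (by simp)) y).hasDerivAt

lemma pd1_eq_fderiv (hf : ContDiff ℝ (⊤:ℕ∞) (uncurry f)) (x y : ℝ) :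
    pd1 f x y = fderiv ℝ (uncurry f) (x, y) (1, 0) := by
  have h1 : HasDerivAt (fun s : ℝ => (s, y)) ((1:ℝ), (0:ℝ)) x :=
    (hasDerivAt_id x).prodMk (hasDerivAt_const x y)
  have h2 := ((hf.differentiable (by simp)) (x, y)).hasFDerivAt
  have h : HasDerivAt (fun s => f s y) (fderiv ℝ (uncurry f) (x, y) (1, 0)) x := by
    simpa [Function.comp_def] using h2.comp_hasDerivAt x h1
  exact h.deriv.symm ▸ rfl

lemma pd2_eq_fderiv (hf : ContDiff ℝ (⊤:ℕ∞) (uncurry f)) (x y : ℝ) :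
    pd2 f x y = fderiv ℝ (uncurry f) (x, y) (0, 1) := by
  have h1 : HasDerivAt (fun t : ℝ => (x, t)) ((0:ℝ), (1:ℝ)) y :=
    (hasDerivAt_const y x).prodMk (hasDerivAt_id y)
  have h2 := ((hf.differentiable (by simp)) (x, y)).hasFDerivAt
  have h : HasDerivAt (fun t => f x t) (fderiv ℝ (uncurry f) (x, y) (0, 1)) y := by
    simpa [Function.comp_def] using h2.comp_hasDerivAt y h1
  exact h.deriv.symm ▸ rfl

lemma contDiff_pd1 (hf : ContDiff ℝ (⊤:ℕ∞) (uncurry f)) :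
    ContDiff ℝ (⊤:ℕ∞) (uncurry (pd1 f)) := by
  have h : uncurry (pd1 f) = fun p : ℝ × ℝ => fderiv ℝ (uncurry f) p (1, 0) := by
    funext p; exact pd1_eq_fderiv hf p.1 p.2
  rw [h]
  exact (hf.fderiv_right (by exact_mod_cast (by exact_mod_cast le_top))).clm_apply contDiff_const

lemma contDiff_pd2 (hf : ContDiff ℝ (⊤:ℕ∞) (uncurry f)) :
    ContDiff ℝ (⊤:ℕ∞) (uncurry (pd2 f)) := by
  have h : uncurry (pd2 f) = fun p : ℝ × ℝ => fderiv ℝ (uncurry f) p (0, 1) := by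
    funext p; exact pd2_eq_fderiv hf p.1 p.2
  rw [h]
  exact (hf.fderiv_right (by exact_mod_cast (by exact_mod_cast le_top))).clm_apply contDiff_const

lemma pd_comm (hf : ContDiff ℝ (⊤:ℕ∞) (uncurry f)) (x y : ℝ) :
    pd1 (pd2 f) x y = pd2 (pd1 f) x y := by
  have hF' : ContDiff ℝ (⊤:ℕ∞) (fderiv ℝ (uncurry f)) :=
    hf.fderiv_right (by exact_mod_cast (by exact_mod_cast le_top))
  have hsymm := second_derivative_symmetric
    (fun z => ((hf.differentiable (by simp)) z).hasFDerivAt)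
    (((hF'.differentiable (by simp)) (x, y)).hasFDerivAt)
  -- pd1 (pd2 f) x y
  have h1 : HasDerivAt (fun s : ℝ => (s, y)) ((1:ℝ), (0:ℝ)) x :=
    (hasDerivAt_id x).prodMk (hasDerivAt_const x y)
  have h2 : HasDerivAt (fun t : ℝ => (x, t)) ((0:ℝ), (1:ℝ)) y :=
    (hasDerivAt_const y x).prodMk (hasDerivAt_id y)
  have hc1 : HasDerivAt (fun s : ℝ => fderiv ℝ (uncurry f) (s, y))
      (fderiv ℝ (fderiv ℝ (uncurry f)) (x, y) (1, 0)) x := by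
    simpa [Function.comp_def] using (((hF'.differentiable (by simp)) (x, y)).hasFDerivAt).comp_hasDerivAt x h1
  have hc2 : HasDerivAt (fun t : ℝ => fderiv ℝ (uncurry f) (x, t))
      (fderiv ℝ (fderiv ℝ (uncurry f)) (x, y) (0, 1)) y := by
    simpa [Function.comp_def] using (((hF'.differentiable (by simp)) (x, y)).hasFDerivAt).comp_hasDerivAt y h2
  have e1 : pd1 (pd2 f) x y = fderiv ℝ (fderiv ℝ (uncurry f)) (x, y) (1, 0) (0, 1) := by
    have : HasDerivAt (fun s => pd2 f s y)
        (fderiv ℝ (fderiv ℝ (uncurry f)) (x, y) (1, 0) (0, 1)) x := by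
      have := hc1.clm_apply (c := fun s : ℝ => fderiv ℝ (uncurry f) (s, y))
        (u := fun _ : ℝ => ((0:ℝ), (1:ℝ))) (hasDerivAt_const x ((0:ℝ), (1:ℝ)))
      simp only [map_zero, add_zero] at this
      refine HasDerivAt.congr_of_eventuallyEq this ?_
      filter_upwards with s
      exact (pd2_eq_fderiv hf s y)
    exact this.deriv
  have e2 : pd2 (pd1 f) x y = fderiv ℝ (fderiv ℝ (uncurry f)) (x, y) (0, 1) (1, 0) := by
    have : HasDerivAt (fun t => pd1 f x t)
        (fderiv ℝ (fderiv ℝ (uncurry f)) (x, y) (0, 1) (1, 0)) y := by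
      have := hc2.clm_apply (u := fun _ : ℝ => ((1:ℝ), (0:ℝ))) (hasDerivAt_const y ((1:ℝ), (0:ℝ)))
      simp only [map_zero, add_zero] at this
      refine HasDerivAt.congr_of_eventuallyEq this ?_
      filter_upwards with t
      exact (pd1_eq_fderiv hf x t)
    exact this.deriv
  rw [e1, e2, hsymm]

lemma pd1_periodic (hp : ∀ r θ : ℝ, f r (θ + 2 * Real.pi) = f r θ) (r θ : ℝ) :
    pd1 f r (θ + 2 * Real.pi) = pd1 f r θ := by
  unfold pd1
  congr 1
  funext s; exact hp s θ

lemma pd2_periodic (hp : ∀ r θ : ℝ, f r (θ + 2 * Real.pi) = f r θ) (r θ : ℝ) :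
    pd2 f r (θ + 2 * Real.pi) = pd2 f r θ := by
  have h : (fun t => f r (t + 2 * Real.pi)) = fun t => f r t := funext (hp r)
  have := deriv_comp_add_const (fun t => f r t) (2 * Real.pi) θ
  unfold pd2
  rw [← this, h]

end Toolkit
set_option maxHeartbeats 1000000

section Mid

open Function intervalIntegral MeasureTheory

/-- Raw `s`-derivative of the energy density. -/
noncomputable def EDv (U A a : ℝ → ℝ → ℝ) (s θ : ℝ) : ℝ :=
  -pd1 a s θ / a s θ ^ 2 * pd1 U s θ ^ 2 + (a s θ)⁻¹ * (2 * pd1 U s θ * pd1 (pd1 U) s θ)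
    + pd1 a s θ * pd2 U s θ ^ 2 + a s θ * (2 * pd2 U s θ * pd1 (pd2 U) s θ)
    + (Real.exp (4 * U s θ) * (4 * pd1 U s θ) * (4 * s ^ 2)
        - Real.exp (4 * U s θ) * (8 * s)) / (4 * s ^ 2) ^ 2
        * ((a s θ)⁻¹ * pd1 A s θ ^ 2 + a s θ * pd2 A s θ ^ 2)
    + Real.exp (4 * U s θ) / (4 * s ^ 2) *
        (-pd1 a s θ / a s θ ^ 2 * pd1 A s θ ^ 2 + (a s θ)⁻¹ * (2 * pd1 A s θ * pd1 (pd1 A) s θ)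
          + pd1 a s θ * pd2 A s θ ^ 2 + a s θ * (2 * pd2 A s θ * pd1 (pd2 A) s θ))

/-- Raw `s`-derivative of the `K`-correction density. -/
noncomputable def MDv (K : ℝ) (η a : ℝ → ℝ → ℝ) (s θ : ℝ) : ℝ :=
  (0 * (4 * s ^ 4) - K ^ 2 * (4 * (4 * s ^ 3))) / (4 * s ^ 4) ^ 2
      * Real.exp (2 * η s θ) * (a s θ)⁻¹
    + K ^ 2 / (4 * s ^ 4) * (Real.exp (2 * η s θ) * (2 * pd1 η s θ)) * (a s θ)⁻¹
    + K ^ 2 / (4 * s ^ 4) * Real.exp (2 * η s θ) * (-pd1 a s θ / a s θ ^ 2)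

/-- `θ`-derivative of the flux `a * F`. -/
noncomputable def W2v (U A a : ℝ → ℝ → ℝ) (s θ : ℝ) : ℝ :=
  pd2 a s θ * Fdens U A s θ
    + a s θ * (2 * pd2 (pd1 U) s θ * pd2 U s θ + 2 * pd1 U s θ * pd2 (pd2 U) s θ
        + 4 * pd2 U s θ * (Real.exp (4 * U s θ) / (2 * s ^ 2)) * (pd1 A s θ * pd2 A s θ)
        + Real.exp (4 * U s θ) / (2 * s ^ 2) *
            (pd2 (pd1 A) s θ * pd2 A s θ + pd1 A s θ * pd2 (pd2 A) s θ))

variable {U A a η : ℝ → ℝ → ℝ} {K : ℝ}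

lemma hasDerivAt_Edens_raw (hU : ContDiff ℝ (⊤:ℕ∞) (uncurry U))
    (hA : ContDiff ℝ (⊤:ℕ∞) (uncurry A)) (ha : ContDiff ℝ (⊤:ℕ∞) (uncurry a))
    {r θ : ℝ} (hr : r ≠ 0) (hb : a r θ ≠ 0) :
    HasDerivAt (fun s => Edens U A a s θ) (EDv U A a r θ) r := by
  have hb' := hasDerivAt_pd1 ha r θ
  have hbi := hb'.inv hb
  have hU0 := hasDerivAt_pd1 hU r θ
  have hU1 := hasDerivAt_pd1 (contDiff_pd1 hU) r θ
  have hU2 := hasDerivAt_pd1 (contDiff_pd2 hU) r θ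
  have hA1 := hasDerivAt_pd1 (contDiff_pd1 hA) r θ
  have hA2 := hasDerivAt_pd1 (contDiff_pd2 hA) r θ
  have he : HasDerivAt (fun s => Real.exp (4 * U s θ)) (Real.exp (4 * U r θ) * (4 * pd1 U r θ)) r :=
    (hU0.const_mul (4:ℝ)).exp
  have hden : HasDerivAt (fun s : ℝ => 4 * s ^ 2) (4 * (2 * r ^ 1)) r := by
    simpa using (hasDerivAt_pow 2 r).const_mul (4:ℝ)
  have hfrac := he.div hden (by positivity)
  have H := ((hbi.mul (hU1.pow 2)).add (hb'.mul (hU2.pow 2))).add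
    (hfrac.mul ((hbi.mul (hA1.pow 2)).add (hb'.mul (hA2.pow 2))))
  simp only [Edens]
  refine H.congr_deriv ?_
  simp only [EDv, Pi.add_apply, Pi.mul_apply, Pi.pow_apply, Pi.inv_apply, Pi.div_apply]
  push_cast
  ring

lemma hasDerivAt_MU (hη : ContDiff ℝ (⊤:ℕ∞) (uncurry η)) (ha : ContDiff ℝ (⊤:ℕ∞) (uncurry a))
    {r θ : ℝ} (hr : r ≠ 0) (hb : a r θ ≠ 0) :
    HasDerivAt (fun s => K ^ 2 / (4 * s ^ 4) * Real.exp (2 * η s θ) * (a s θ)⁻¹)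
      (MDv K η a r θ) r := by
  have hb' := hasDerivAt_pd1 ha r θ
  have hbi := hb'.inv hb
  have hden : HasDerivAt (fun s : ℝ => 4 * s ^ 4) (4 * (4 * r ^ 3)) r := by
    simpa using (hasDerivAt_pow 4 r).const_mul (4:ℝ)
  have hc := (hasDerivAt_const r (K ^ 2)).div hden (by positivity)
  have hexp : HasDerivAt (fun s => Real.exp (2 * η s θ))
      (Real.exp (2 * η r θ) * (2 * pd1 η r θ)) r :=
    ((hasDerivAt_pd1 hη r θ).const_mul (2:ℝ)).exp
  have H := (hc.mul hexp).mul hbi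
  refine H.congr_deriv ?_
  simp only [MDv, Pi.add_apply, Pi.mul_apply, Pi.pow_apply, Pi.inv_apply, Pi.div_apply]
  push_cast
  ring

lemma hasDerivAt_Wv (hU : ContDiff ℝ (⊤:ℕ∞) (uncurry U))
    (hA : ContDiff ℝ (⊤:ℕ∞) (uncurry A)) (ha : ContDiff ℝ (⊤:ℕ∞) (uncurry a))
    (s θ : ℝ) :
    HasDerivAt (fun t => a s t * Fdens U A s t) (W2v U A a s θ) θ := by
  have ha2 := hasDerivAt_pd2 ha s θ
  have hu1 := hasDerivAt_pd2 (contDiff_pd1 hU) s θ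
  have hu2 := hasDerivAt_pd2 (contDiff_pd2 hU) s θ
  have hp1 := hasDerivAt_pd2 (contDiff_pd1 hA) s θ
  have hp2 := hasDerivAt_pd2 (contDiff_pd2 hA) s θ
  have he : HasDerivAt (fun t => Real.exp (4 * U s t)) (Real.exp (4 * U s θ) * (4 * pd2 U s θ)) θ :=
    ((hasDerivAt_pd2 hU s θ).const_mul (4:ℝ)).exp
  have hF : HasDerivAt (fun t => Fdens U A s t)
      (2 * pd2 (pd1 U) s θ * pd2 U s θ + 2 * pd1 U s θ * pd2 (pd2 U) s θ
        + 4 * pd2 U s θ * (Real.exp (4 * U s θ) / (2 * s ^ 2)) * (pd1 A s θ * pd2 A s θ)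
        + Real.exp (4 * U s θ) / (2 * s ^ 2) *
            (pd2 (pd1 A) s θ * pd2 A s θ + pd1 A s θ * pd2 (pd2 A) s θ)) θ := by
    have H := (((hu1.const_mul (2:ℝ)).mul hu2).add
      ((he.div_const (2 * s ^ 2)).mul (hp1.mul hp2)))
    simp only [Fdens]
    refine H.congr_deriv ?_
    simp only [Pi.add_apply, Pi.mul_apply, Pi.pow_apply, Pi.inv_apply, Pi.div_apply]
    ring
  have H := ha2.mul hF
  refine H.congr_deriv ?_
  all_goals simp only [W2v, Pi.add_apply, Pi.mul_apply, Pi.pow_apply, Pi.inv_apply, Pi.div_apply]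
  all_goals ring

-- expansions of the composite partial derivatives appearing in the field equations
lemma expand_eqU_1 (hU : ContDiff ℝ (⊤:ℕ∞) (uncurry U)) (ha : ContDiff ℝ (⊤:ℕ∞) (uncurry a))
    {r θ : ℝ} (hb : a r θ ≠ 0) :
    pd1 (fun r' θ' => r' * (a r' θ')⁻¹ * pd1 U r' θ') r θ
      = (a r θ)⁻¹ * pd1 U r θ + r * (-pd1 a r θ / a r θ ^ 2) * pd1 U r θ
        + r * (a r θ)⁻¹ * pd1 (pd1 U) r θ := by
  have H := (((hasDerivAt_id' r).mul ((hasDerivAt_pd1 ha r θ).inv hb)).mul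
    (hasDerivAt_pd1 (contDiff_pd1 hU) r θ))
  show deriv (fun s => s * (a s θ)⁻¹ * pd1 U s θ) r = _
  refine H.deriv.trans ?_; simp only [Pi.mul_apply, Pi.inv_apply]; ring

lemma expand_eqU_2 (hU : ContDiff ℝ (⊤:ℕ∞) (uncurry U)) (ha : ContDiff ℝ (⊤:ℕ∞) (uncurry a))
    (r θ : ℝ) :
    pd2 (fun r' θ' => r' * a r' θ' * pd2 U r' θ') r θ
      = r * (pd2 a r θ * pd2 U r θ + a r θ * pd2 (pd2 U) r θ) := by
  have H := (((hasDerivAt_const θ r).mul (hasDerivAt_pd2 ha r θ)).mul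
    (hasDerivAt_pd2 (contDiff_pd2 hU) r θ))
  show deriv (fun t => r * a r t * pd2 U r t) θ = _
  refine H.deriv.trans ?_; simp only [Pi.mul_apply, Pi.inv_apply]; ring

lemma expand_eqA_1 (hA : ContDiff ℝ (⊤:ℕ∞) (uncurry A)) (ha : ContDiff ℝ (⊤:ℕ∞) (uncurry a))
    {r θ : ℝ} (hr : r ≠ 0) (hb : a r θ ≠ 0) :
    pd1 (fun r' θ' => r'⁻¹ * (a r' θ')⁻¹ * pd1 A r' θ') r θ
      = -(r ^ 2)⁻¹ * ((a r θ)⁻¹ * pd1 A r θ) + r⁻¹ * (-pd1 a r θ / a r θ ^ 2) * pd1 A r θ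
        + r⁻¹ * (a r θ)⁻¹ * pd1 (pd1 A) r θ := by
  have H := (((hasDerivAt_inv hr).mul ((hasDerivAt_pd1 ha r θ).inv hb)).mul
    (hasDerivAt_pd1 (contDiff_pd1 hA) r θ))
  show deriv (fun s => s⁻¹ * (a s θ)⁻¹ * pd1 A s θ) r = _
  refine H.deriv.trans ?_; simp only [Pi.mul_apply, Pi.inv_apply]; ring

lemma expand_eqA_2 (hA : ContDiff ℝ (⊤:ℕ∞) (uncurry A)) (ha : ContDiff ℝ (⊤:ℕ∞) (uncurry a))
    (r θ : ℝ) :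
    pd2 (fun r' θ' => r'⁻¹ * a r' θ' * pd2 A r' θ') r θ
      = r⁻¹ * (pd2 a r θ * pd2 A r θ + a r θ * pd2 (pd2 A) r θ) := by
  have H := (((hasDerivAt_const θ (r⁻¹)).mul (hasDerivAt_pd2 ha r θ)).mul
    (hasDerivAt_pd2 (contDiff_pd2 hA) r θ))
  show deriv (fun t => r⁻¹ * a r t * pd2 A r t) θ = _
  refine H.deriv.trans ?_; simp only [Pi.mul_apply, Pi.inv_apply]; ring

lemma expand_loga (ha : ContDiff ℝ (⊤:ℕ∞) (uncurry a)) {r θ : ℝ} (hb : a r θ ≠ 0) :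
    pd1 (fun r' θ' => Real.log (a r' θ')) r θ = pd1 a r θ / a r θ := by
  have H := (hasDerivAt_pd1 ha r θ).log hb
  show deriv (fun s => Real.log (a s θ)) r = _
  rw [H.deriv]

end Mid
set_option maxHeartbeats 2000000 in
lemma keyalg (s b b1 b2 u1 u2 u11 u12 u22 q1 q2 q11 q12 q22 e lam : ℝ)
    (hs : s ≠ 0) (hb : b ≠ 0)
    (hE1 : b⁻¹ * u1 + s * (-b1 / b ^ 2) * u1 + s * b⁻¹ * u11 - s * (b2 * u2 + b * u22)
      = e / (2 * s) * (b⁻¹ * q1 ^ 2 - b * q2 ^ 2))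
    (hE2 : -(s ^ 2)⁻¹ * (b⁻¹ * q1) + s⁻¹ * (-b1 / b ^ 2) * q1 + s⁻¹ * b⁻¹ * q11
        - s⁻¹ * (b2 * q2 + b * q22)
      = 4 / s * (b * u2 * q2 - b⁻¹ * u1 * q1))
    (hE3 : b1 = -lam * b) :
    (-b1 / b ^ 2) * u1 ^ 2 + b⁻¹ * (2 * u1 * u11)
      + b1 * u2 ^ 2 + b * (2 * u2 * u12)
      + (e * (4 * u1) * (4 * s ^ 2) - e * (8 * s)) / (4 * s ^ 2) ^ 2 *
          (b⁻¹ * q1 ^ 2 + b * q2 ^ 2)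
      + e / (4 * s ^ 2) * ((-b1 / b ^ 2) * q1 ^ 2 + b⁻¹ * (2 * q1 * q11)
          + b1 * q2 ^ 2 + b * (2 * q2 * q12))
    = (b2 * (2 * u1 * u2 + e / (2 * s ^ 2) * (q1 * q2))
        + b * (2 * u12 * u2 + 2 * u1 * u22 + 4 * u2 * (e / (2 * s ^ 2)) * (q1 * q2)
            + e / (2 * s ^ 2) * (q12 * q2 + q1 * q22)))
      + (-lam * (b⁻¹ * u1 ^ 2 + b * u2 ^ 2 + e / (4 * s ^ 2) * (b⁻¹ * q1 ^ 2 + b * q2 ^ 2))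
          - 2 / s * (b⁻¹ * u1 ^ 2 + e / (4 * s ^ 2) * b * q2 ^ 2)) := by
  have hu11 : u11 = (b / s) * (e / (2 * s) * (b⁻¹ * q1 ^ 2 - b * q2 ^ 2)
      - b⁻¹ * u1 - s * (-b1 / b ^ 2) * u1 + s * (b2 * u2 + b * u22)) := by
    field_simp at hE1 ⊢
    linear_combination hE1
  have hq11 : q11 = (s * b) * (4 / s * (b * u2 * q2 - b⁻¹ * u1 * q1)
      + (s ^ 2)⁻¹ * (b⁻¹ * q1) - s⁻¹ * (-b1 / b ^ 2) * q1 + s⁻¹ * (b2 * q2 + b * q22)) := by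
    field_simp at hE2 ⊢
    linear_combination hE2
  subst hu11 hq11 hE3
  field_simp
  ring

lemma keyalg2 (r b b1 h1 Ev K eh : ℝ) (hr : r ≠ 0) (hb : b ≠ 0)
    (hh1 : h1 + K ^ 2 / (4 * r ^ 3) * eh = b * r * Ev)
    (hb1 : b1 = -(K ^ 2 * eh / (2 * r ^ 3)) * b) :
    (0 * (4 * r ^ 4) - K ^ 2 * (4 * (4 * r ^ 3))) / (4 * r ^ 4) ^ 2 * eh * b⁻¹
      + K ^ 2 / (4 * r ^ 4) * (eh * (2 * h1)) * b⁻¹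
      + K ^ 2 / (4 * r ^ 4) * eh * (-b1 / b ^ 2)
    = K ^ 2 * eh / (2 * r ^ 3) * Ev - 4 / r * (K ^ 2 / (4 * r ^ 4) * eh * b⁻¹) := by
  subst hb1
  have h1e : h1 = b * r * Ev - K ^ 2 / (4 * r ^ 3) * eh := by linarith
  subst h1e
  field_simp
  ring

section Ident
open Function
variable {U A a η : ℝ → ℝ → ℝ} {K : ℝ}

lemma EDv_identity (hU : ContDiff ℝ (⊤:ℕ∞) (uncurry U)) (hA : ContDiff ℝ (⊤:ℕ∞) (uncurry A))
    (ha : ContDiff ℝ (⊤:ℕ∞) (uncurry a)) {r θ : ℝ} (hr : 0 < r) (hb : 0 < a r θ)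
    (heU : pd1 (fun r' θ' => r' * (a r' θ')⁻¹ * pd1 U r' θ') r θ
      - pd2 (fun r' θ' => r' * a r' θ' * pd2 U r' θ') r θ
      = Real.exp (4 * U r θ) / (2 * r) *
          ((a r θ)⁻¹ * (pd1 A r θ) ^ 2 - a r θ * (pd2 A r θ) ^ 2))
    (heA : pd1 (fun r' θ' => r'⁻¹ * (a r' θ')⁻¹ * pd1 A r' θ') r θ
      - pd2 (fun r' θ' => r'⁻¹ * a r' θ' * pd2 A r' θ') r θ
      = (4 / r) * (a r θ * pd2 U r θ * pd2 A r θ - (a r θ)⁻¹ * pd1 U r θ * pd1 A r θ))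
    (hea : pd1 (fun r' θ' => Real.log (a r' θ')) r θ
      = -(K ^ 2 * Real.exp (2 * η r θ)) / (2 * r ^ 3)) :
    EDv U A a r θ = W2v U A a r θ
      + (-(K ^ 2 * Real.exp (2 * η r θ) / (2 * r ^ 3)) * Edens U A a r θ
        - 2 / r * ((a r θ)⁻¹ * pd1 U r θ ^ 2
            + Real.exp (4 * U r θ) / (4 * r ^ 2) * (a r θ) * pd2 A r θ ^ 2)) := by
  rw [expand_eqU_1 hU ha hb.ne', expand_eqU_2 hU ha r θ] at heU
  rw [expand_eqA_1 hA ha hr.ne' hb.ne', expand_eqA_2 hA ha r θ] at heA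
  rw [expand_loga ha hb.ne'] at hea
  have hE1 : (a r θ)⁻¹ * pd1 U r θ + r * (-pd1 a r θ / a r θ ^ 2) * pd1 U r θ
      + r * (a r θ)⁻¹ * pd1 (pd1 U) r θ
      - r * (pd2 a r θ * pd2 U r θ + a r θ * pd2 (pd2 U) r θ)
      = Real.exp (4 * U r θ) / (2 * r) *
          ((a r θ)⁻¹ * pd1 A r θ ^ 2 - a r θ * pd2 A r θ ^ 2) := by
    linear_combination heU
  have hE2 : -(r ^ 2)⁻¹ * ((a r θ)⁻¹ * pd1 A r θ) + r⁻¹ * (-pd1 a r θ / a r θ ^ 2) * pd1 A r θ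
      + r⁻¹ * (a r θ)⁻¹ * pd1 (pd1 A) r θ
      - r⁻¹ * (pd2 a r θ * pd2 A r θ + a r θ * pd2 (pd2 A) r θ)
      = 4 / r * (a r θ * pd2 U r θ * pd2 A r θ - (a r θ)⁻¹ * pd1 U r θ * pd1 A r θ) := by
    linear_combination heA
  have hE3 : pd1 a r θ = -(K ^ 2 * Real.exp (2 * η r θ) / (2 * r ^ 3)) * a r θ := by
    have h' : pd1 a r θ = pd1 a r θ / a r θ * a r θ := by field_simp
    rw [h', hea]; ring
  have key := keyalg r (a r θ) (pd1 a r θ) (pd2 a r θ) (pd1 U r θ) (pd2 U r θ)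
    (pd1 (pd1 U) r θ) (pd1 (pd2 U) r θ) (pd2 (pd2 U) r θ)
    (pd1 A r θ) (pd2 A r θ) (pd1 (pd1 A) r θ) (pd1 (pd2 A) r θ) (pd2 (pd2 A) r θ)
    (Real.exp (4 * U r θ)) (K ^ 2 * Real.exp (2 * η r θ) / (2 * r ^ 3))
    hr.ne' hb.ne' hE1 hE2 hE3
  have c1 := pd_comm hU r θ
  have c2 := pd_comm hA r θ
  simp only [EDv, W2v, Edens, Fdens, ← c1, ← c2]
  linear_combination key

lemma MDv_identity (hη : ContDiff ℝ (⊤:ℕ∞) (uncurry η)) (ha : ContDiff ℝ (⊤:ℕ∞) (uncurry a))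
    {r θ : ℝ} (hr : 0 < r) (hb : 0 < a r θ)
    (heη : pd1 η r θ + K ^ 2 / (4 * r ^ 3) * Real.exp (2 * η r θ)
      = a r θ * r * Edens U A a r θ)
    (hea : pd1 (fun r' θ' => Real.log (a r' θ')) r θ
      = -(K ^ 2 * Real.exp (2 * η r θ)) / (2 * r ^ 3)) :
    MDv K η a r θ = K ^ 2 * Real.exp (2 * η r θ) / (2 * r ^ 3) * Edens U A a r θ
      - 4 / r * (K ^ 2 / (4 * r ^ 4) * Real.exp (2 * η r θ) * (a r θ)⁻¹) := by
  rw [expand_loga ha hb.ne'] at hea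
  have hE3 : pd1 a r θ = -(K ^ 2 * Real.exp (2 * η r θ) / (2 * r ^ 3)) * a r θ := by
    have h' : pd1 a r θ = pd1 a r θ / a r θ * a r θ := by field_simp
    rw [h', hea]; ring
  have key := keyalg2 r (a r θ) (pd1 a r θ) (pd1 η r θ) (Edens U A a r θ) K
    (Real.exp (2 * η r θ)) hr.ne' hb.ne' heη hE3
  simp only [MDv]
  linear_combination key

end Ident
section Int
open Function MeasureTheory intervalIntegral

variable {U A a η : ℝ → ℝ → ℝ} {K : ℝ}

lemma cont2 {f : ℝ → ℝ → ℝ} (hf : ContDiff ℝ (⊤:ℕ∞) (uncurry f)) :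
    Continuous fun p : ℝ × ℝ => f p.1 p.2 := hf.continuous

lemma cont_Edens_slice (hU : ContDiff ℝ (⊤:ℕ∞) (uncurry U)) (hA : ContDiff ℝ (⊤:ℕ∞) (uncurry A))
    (ha : ContDiff ℝ (⊤:ℕ∞) (uncurry a)) {x : ℝ} (hb : ∀ θ, a x θ ≠ 0) :
    Continuous fun θ => Edens U A a x θ := by
  have c0 : Continuous fun θ => a x θ := (slice2_contDiff ha x).continuous
  have cbi : Continuous fun θ => (a x θ)⁻¹ := c0.inv₀ hb
  have cU : Continuous fun θ => U x θ := (slice2_contDiff hU x).continuous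
  have cu1 : Continuous fun θ => pd1 U x θ := (slice2_contDiff (contDiff_pd1 hU) x).continuous
  have cu2 : Continuous fun θ => pd2 U x θ := (slice2_contDiff (contDiff_pd2 hU) x).continuous
  have cp1 : Continuous fun θ => pd1 A x θ := (slice2_contDiff (contDiff_pd1 hA) x).continuous
  have cp2 : Continuous fun θ => pd2 A x θ := (slice2_contDiff (contDiff_pd2 hA) x).continuous
  have cexp : Continuous fun θ => Real.exp (4 * U x θ) :=
    Real.continuous_exp.comp (continuous_const.mul cU)
  simp only [Edens]
  exact ((cbi.mul (cu1.pow 2)).add (c0.mul (cu2.pow 2))).add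
    ((cexp.div_const _).mul ((cbi.mul (cp1.pow 2)).add (c0.mul (cp2.pow 2))))

lemma cont_EnKdens_slice (hU : ContDiff ℝ (⊤:ℕ∞) (uncurry U)) (hA : ContDiff ℝ (⊤:ℕ∞) (uncurry A))
    (ha : ContDiff ℝ (⊤:ℕ∞) (uncurry a)) (hη : ContDiff ℝ (⊤:ℕ∞) (uncurry η))
    {x : ℝ} (hb : ∀ θ, a x θ ≠ 0) :
    Continuous fun θ => Edens U A a x θ
      + K ^ 2 / (4 * x ^ 4) * Real.exp (2 * η x θ) * (a x θ)⁻¹ := by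
  have c0 : Continuous fun θ => a x θ := (slice2_contDiff ha x).continuous
  have cbi : Continuous fun θ => (a x θ)⁻¹ := c0.inv₀ hb
  have cη : Continuous fun θ => η x θ := (slice2_contDiff hη x).continuous
  have cexp : Continuous fun θ => Real.exp (2 * η x θ) :=
    Real.continuous_exp.comp (continuous_const.mul cη)
  exact (cont_Edens_slice hU hA ha hb).add (((continuous_const.mul cexp)).mul cbi)

lemma contOn_EDv (hU : ContDiff ℝ (⊤:ℕ∞) (uncurry U)) (hA : ContDiff ℝ (⊤:ℕ∞) (uncurry A))
    (ha : ContDiff ℝ (⊤:ℕ∞) (uncurry a)) {s : Set (ℝ × ℝ)}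
    (h1 : ∀ p ∈ s, p.1 ≠ 0) (h2 : ∀ p ∈ s, a p.1 p.2 ≠ 0) :
    ContinuousOn (fun p : ℝ × ℝ => EDv U A a p.1 p.2) s := by
  have c0 : Continuous fun p : ℝ × ℝ => a p.1 p.2 := cont2 ha
  have cb1 : Continuous fun p : ℝ × ℝ => pd1 a p.1 p.2 := cont2 (contDiff_pd1 ha)
  have cbi : ContinuousOn (fun p : ℝ × ℝ => (a p.1 p.2)⁻¹) s := c0.continuousOn.inv₀ h2
  have cU : Continuous fun p : ℝ × ℝ => U p.1 p.2 := cont2 hU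
  have cu1 : Continuous fun p : ℝ × ℝ => pd1 U p.1 p.2 := cont2 (contDiff_pd1 hU)
  have cu2 : Continuous fun p : ℝ × ℝ => pd2 U p.1 p.2 := cont2 (contDiff_pd2 hU)
  have cu11 : Continuous fun p : ℝ × ℝ => pd1 (pd1 U) p.1 p.2 := cont2 (contDiff_pd1 (contDiff_pd1 hU))
  have cu12 : Continuous fun p : ℝ × ℝ => pd1 (pd2 U) p.1 p.2 := cont2 (contDiff_pd1 (contDiff_pd2 hU))
  have cp1 : Continuous fun p : ℝ × ℝ => pd1 A p.1 p.2 := cont2 (contDiff_pd1 hA)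
  have cp2 : Continuous fun p : ℝ × ℝ => pd2 A p.1 p.2 := cont2 (contDiff_pd2 hA)
  have cp11 : Continuous fun p : ℝ × ℝ => pd1 (pd1 A) p.1 p.2 := cont2 (contDiff_pd1 (contDiff_pd1 hA))
  have cp12 : Continuous fun p : ℝ × ℝ => pd1 (pd2 A) p.1 p.2 := cont2 (contDiff_pd1 (contDiff_pd2 hA))
  have cexp : Continuous fun p : ℝ × ℝ => Real.exp (4 * U p.1 p.2) :=
    Real.continuous_exp.comp (continuous_const.mul cU)
  have hb2 : ∀ p ∈ s, (a p.1 p.2) ^ 2 ≠ 0 := fun p hp => pow_ne_zero 2 (h2 p hp)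
  have hfrac : ∀ p ∈ s, ((4:ℝ) * p.1 ^ 2) ^ 2 ≠ 0 := by
    intro p hp
    exact pow_ne_zero 2 (mul_ne_zero (by norm_num) (pow_ne_zero 2 (h1 p hp)))
  have cg1 : ContinuousOn (fun p : ℝ × ℝ => -pd1 a p.1 p.2 / a p.1 p.2 ^ 2) s :=
    cb1.neg.continuousOn.div ((c0.pow 2).continuousOn) hb2
  have cs : Continuous fun p : ℝ × ℝ => p.1 := continuous_fst
  haveI : True := trivial
  simp only [EDv]
  refine ((((((cg1.mul (cu1.pow 2).continuousOn).add
      (cbi.mul ((continuous_const.mul cu1).mul cu11).continuousOn)).add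
      (cb1.mul (cu2.pow 2)).continuousOn).add
      (c0.mul ((continuous_const.mul cu2).mul cu12)).continuousOn).add
      (ContinuousOn.mul (ContinuousOn.div
          (((cexp.mul (continuous_const.mul cu1)).mul (continuous_const.mul (cs.pow 2))).sub
            (cexp.mul (continuous_const.mul cs))).continuousOn
          (((continuous_const.mul (cs.pow 2)).pow 2).continuousOn) hfrac)
        ((cbi.mul (cp1.pow 2).continuousOn).add ((c0.mul (cp2.pow 2)).continuousOn)))).add
      (ContinuousOn.mul (ContinuousOn.div cexp.continuousOn
          ((continuous_const.mul (cs.pow 2)).continuousOn)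
          (fun p hp => mul_ne_zero (by norm_num) (pow_ne_zero 2 (h1 p hp))))
        ((((cg1.mul (cp1.pow 2).continuousOn).add
            (cbi.mul ((continuous_const.mul cp1).mul cp11).continuousOn)).add
            (cb1.mul (cp2.pow 2)).continuousOn).add
            (c0.mul ((continuous_const.mul cp2).mul cp12)).continuousOn)))

lemma contOn_MDv (hη : ContDiff ℝ (⊤:ℕ∞) (uncurry η)) (ha : ContDiff ℝ (⊤:ℕ∞) (uncurry a))
    {s : Set (ℝ × ℝ)} (h1 : ∀ p ∈ s, p.1 ≠ 0) (h2 : ∀ p ∈ s, a p.1 p.2 ≠ 0) :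
    ContinuousOn (fun p : ℝ × ℝ => MDv K η a p.1 p.2) s := by
  have c0 : Continuous fun p : ℝ × ℝ => a p.1 p.2 := cont2 ha
  have cb1 : Continuous fun p : ℝ × ℝ => pd1 a p.1 p.2 := cont2 (contDiff_pd1 ha)
  have cbi : ContinuousOn (fun p : ℝ × ℝ => (a p.1 p.2)⁻¹) s := c0.continuousOn.inv₀ h2
  have cη : Continuous fun p : ℝ × ℝ => η p.1 p.2 := cont2 hη
  have ch1 : Continuous fun p : ℝ × ℝ => pd1 η p.1 p.2 := cont2 (contDiff_pd1 hη)
  have cexp : Continuous fun p : ℝ × ℝ => Real.exp (2 * η p.1 p.2) :=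
    Real.continuous_exp.comp (continuous_const.mul cη)
  have cs : Continuous fun p : ℝ × ℝ => p.1 := continuous_fst
  have hb2 : ∀ p ∈ s, (a p.1 p.2) ^ 2 ≠ 0 := fun p hp => pow_ne_zero 2 (h2 p hp)
  have h4 : ∀ p ∈ s, (4:ℝ) * p.1 ^ 4 ≠ 0 :=
    fun p hp => mul_ne_zero (by norm_num) (pow_ne_zero 4 (h1 p hp))
  have h4b : ∀ p ∈ s, ((4:ℝ) * p.1 ^ 4) ^ 2 ≠ 0 :=
    fun p hp => pow_ne_zero 2 (h4 p hp)
  simp only [MDv]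
  refine ((((ContinuousOn.div
      ((continuous_const.mul (continuous_const.mul (cs.pow 4))).sub
        (continuous_const.mul (continuous_const.mul (continuous_const.mul (cs.pow 3))))).continuousOn
      (((continuous_const.mul (cs.pow 4)).pow 2).continuousOn) h4b).mul
      cexp.continuousOn).mul cbi).add
    (((ContinuousOn.div continuous_const.continuousOn
        ((continuous_const.mul (cs.pow 4)).continuousOn) h4).mul
        (cexp.mul (continuous_const.mul ch1)).continuousOn).mul cbi)).add
      ((((ContinuousOn.div continuous_const.continuousOn
          ((continuous_const.mul (cs.pow 4)).continuousOn) h4).mul cexp.continuousOn)).mul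
        (cb1.neg.continuousOn.div ((c0.pow 2).continuousOn) hb2))

lemma cont_W2v_slice (hU : ContDiff ℝ (⊤:ℕ∞) (uncurry U)) (hA : ContDiff ℝ (⊤:ℕ∞) (uncurry A))
    (ha : ContDiff ℝ (⊤:ℕ∞) (uncurry a)) (s : ℝ) :
    Continuous fun θ => W2v U A a s θ := by
  have c0 : Continuous fun θ => a s θ := (slice2_contDiff ha s).continuous
  have cb2 : Continuous fun θ => pd2 a s θ := (slice2_contDiff (contDiff_pd2 ha) s).continuous
  have cU : Continuous fun θ => U s θ := (slice2_contDiff hU s).continuous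
  have cu1 : Continuous fun θ => pd1 U s θ := (slice2_contDiff (contDiff_pd1 hU) s).continuous
  have cu2 : Continuous fun θ => pd2 U s θ := (slice2_contDiff (contDiff_pd2 hU) s).continuous
  have cu12 : Continuous fun θ => pd2 (pd1 U) s θ :=
    (slice2_contDiff (contDiff_pd2 (contDiff_pd1 hU)) s).continuous
  have cu22 : Continuous fun θ => pd2 (pd2 U) s θ :=
    (slice2_contDiff (contDiff_pd2 (contDiff_pd2 hU)) s).continuous
  have cp1 : Continuous fun θ => pd1 A s θ := (slice2_contDiff (contDiff_pd1 hA) s).continuous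
  have cp2 : Continuous fun θ => pd2 A s θ := (slice2_contDiff (contDiff_pd2 hA) s).continuous
  have cp12 : Continuous fun θ => pd2 (pd1 A) s θ :=
    (slice2_contDiff (contDiff_pd2 (contDiff_pd1 hA)) s).continuous
  have cp22 : Continuous fun θ => pd2 (pd2 A) s θ :=
    (slice2_contDiff (contDiff_pd2 (contDiff_pd2 hA)) s).continuous
  have cexp : Continuous fun θ => Real.exp (4 * U s θ) :=
    Real.continuous_exp.comp (continuous_const.mul cU)
  have cF : Continuous fun θ => Fdens U A s θ := by
    simp only [Fdens]
    exact ((continuous_const.mul cu1).mul cu2).add ((cexp.div_const _).mul (cp1.mul cp2))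
  simp only [W2v]
  exact (cb2.mul cF).add
    (c0.mul (((((continuous_const.mul cu12).mul cu2).add ((continuous_const.mul cu1).mul cu22)).add
      (((continuous_const.mul cu2).mul (cexp.div_const _)).mul (cp1.mul cp2))).add
        ((cexp.div_const _).mul ((cp12.mul cp2).add (cp1.mul cp22)))))

lemma Fdens_periodic (hpU : ∀ r θ : ℝ, U r (θ + 2 * π) = U r θ)
    (hpA : ∀ r θ : ℝ, A r (θ + 2 * π) = A r θ) (s θ : ℝ) :
    Fdens U A s (θ + 2 * π) = Fdens U A s θ := by
  simp only [Fdens, pd1_periodic hpU, pd2_periodic hpU, pd1_periodic hpA, pd2_periodic hpA, hpU]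

lemma integral_W2v_zero (hU : ContDiff ℝ (⊤:ℕ∞) (uncurry U)) (hA : ContDiff ℝ (⊤:ℕ∞) (uncurry A))
    (ha : ContDiff ℝ (⊤:ℕ∞) (uncurry a))
    (hpU : ∀ r θ : ℝ, U r (θ + 2 * π) = U r θ) (hpA : ∀ r θ : ℝ, A r (θ + 2 * π) = A r θ)
    (hpa : ∀ r θ : ℝ, a r (θ + 2 * π) = a r θ) (s : ℝ) :
    ∫ θ in (0:ℝ)..(2 * π), W2v U A a s θ = 0 := by
  rw [integral_eq_sub_of_hasDerivAt (f := fun t => a s t * Fdens U A s t)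
    (fun t _ => hasDerivAt_Wv hU hA ha s t)
    ((cont_W2v_slice hU hA ha s).intervalIntegrable 0 (2 * π))]
  have h0 : (2 * π : ℝ) = 0 + 2 * π := by ring
  rw [h0, hpa s 0, Fdens_periodic hpU hpA s 0, sub_self]

/-- Differentiation under the interval integral, via local domination on an open set. -/
lemma hasDerivAt_param_integral (F F' : ℝ → ℝ → ℝ) {Ω : Set ℝ} (hΩ : IsOpen Ω) {x : ℝ}
    (hx : x ∈ Ω)
    (hFc : ∀ y ∈ Ω, Continuous fun θ => F y θ)
    (hF'c : ContinuousOn (fun p : ℝ × ℝ => F' p.1 p.2) (Ω ×ˢ (Set.univ : Set ℝ)))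
    (hd : ∀ y ∈ Ω, ∀ θ : ℝ, HasDerivAt (fun z => F z θ) (F' y θ) y) :
    HasDerivAt (fun y => ∫ θ in (0:ℝ)..(2 * π), F y θ)
      (∫ θ in (0:ℝ)..(2 * π), F' x θ) x := by
  obtain ⟨ε, hε, hball⟩ := Metric.isOpen_iff.1 hΩ x hx
  have hsub : Metric.closedBall x (ε / 2) ⊆ Ω :=
    (Metric.closedBall_subset_ball (by linarith)).trans hball
  have hcomp : IsCompact ((Metric.closedBall x (ε / 2)) ×ˢ Set.Icc (0:ℝ) (2 * π)) :=
    (isCompact_closedBall x _).prod isCompact_Icc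
  obtain ⟨C, hC⟩ := hcomp.exists_bound_of_continuousOn
    (hF'c.mono (fun p hp => ⟨hsub hp.1, trivial⟩))
  have hF'cont : Continuous fun θ => F' x θ := by
    rw [← continuousOn_univ]
    exact hF'c.comp (Continuous.continuousOn (continuous_const.prodMk continuous_id))
      (fun θ _ => ⟨hx, trivial⟩)
  have main := intervalIntegral.hasDerivAt_integral_of_dominated_loc_of_deriv_le
    (μ := volume) (F := F) (F' := fun y θ => F' y θ) (x₀ := x) (a := (0:ℝ)) (b := 2 * π)
    (bound := fun _ => C) (Metric.ball_mem_nhds x (half_pos hε))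
    (Filter.eventually_of_mem (hΩ.mem_nhds hx)
      (fun y hy => ((hFc y hy).aestronglyMeasurable)))
    ((hFc x hx).intervalIntegrable 0 (2 * π))
    hF'cont.aestronglyMeasurable
    ?_ intervalIntegrable_const ?_
  · exact main.2
  · refine Filter.Eventually.of_forall (fun θ hθ y hy => ?_)
    have hθ' : θ ∈ Set.Icc (0:ℝ) (2 * π) := by
      have : θ ∈ Set.Ioc (0:ℝ) (2 * π) := by
        rwa [Set.uIoc_of_le (by positivity)] at hθ
      exact Set.Ioc_subset_Icc_self this
    exact hC (y, θ) ⟨Metric.ball_subset_closedBall hy, hθ'⟩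
  · refine Filter.Eventually.of_forall (fun θ hθ y hy => ?_)
    exact hd y (hsub (Metric.ball_subset_closedBall hy)) θ

end Int
section Sol
open Function MeasureTheory intervalIntegral

lemma Edens_nonneg {U A a : ℝ → ℝ → ℝ} {r θ : ℝ} (hb : 0 < a r θ) :
    0 ≤ Edens U A a r θ := by
  have hb' := hb.le
  simp only [Edens]
  exact add_nonneg
    (add_nonneg (mul_nonneg (inv_nonneg.2 hb') (sq_nonneg _)) (mul_nonneg hb' (sq_nonneg _)))
    (mul_nonneg (div_nonneg (Real.exp_nonneg _) (by positivity))
      (add_nonneg (mul_nonneg (inv_nonneg.2 hb') (sq_nonneg _)) (mul_nonneg hb' (sq_nonneg _))))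

variable {R₀ Rs K : ℝ}

lemma exists_shell (hR₀ : 0 < R₀) (hRs : R₀ < Rs) (S : ArealSol (Set.Ico R₀ Rs) K) :
    ∃ Ω : Set ℝ, IsOpen Ω ∧ Set.Ico R₀ Rs ⊆ Ω ∧ Ω ⊆ Set.Iio Rs ∧
      (∀ s ∈ Ω, 0 < s) ∧ (∀ s ∈ Ω, ∀ θ, 0 < S.a s θ) := by
  have hVopen : IsOpen {p : ℝ × ℝ | 0 < S.a p.1 p.2} :=
    isOpen_lt continuous_const (cont2 S.smooth_a)
  have hKc : IsCompact (({R₀} : Set ℝ) ×ˢ Set.Icc (0:ℝ) (2 * π)) :=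
    isCompact_singleton.prod isCompact_Icc
  have hKV : (({R₀} : Set ℝ) ×ˢ Set.Icc (0:ℝ) (2 * π)) ⊆ {p : ℝ × ℝ | 0 < S.a p.1 p.2} := by
    rintro ⟨p1, p2⟩ ⟨hp1, _⟩
    have hp1' : p1 = R₀ := hp1
    rw [Set.mem_setOf_eq, hp1']
    exact S.apos R₀ ⟨le_rfl, hRs⟩ p2
  obtain ⟨δ₀, hδ₀, hthick⟩ := hKc.exists_thickening_subset_open hVopen hKV
  set δ := min (δ₀ / 2) (R₀ / 2) with hδdef
  have hδpos : 0 < δ := lt_min (by linarith) (by linarith)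
  refine ⟨Set.Ioo (R₀ - δ) Rs, isOpen_Ioo, ?_, ?_, ?_, ?_⟩
  · intro s hs; exact ⟨by linarith [hs.1], hs.2⟩
  · intro s hs; exact hs.2
  · intro s hs
    have h1 := hs.1
    have : δ ≤ R₀ / 2 := min_le_right _ _
    linarith
  · intro s hs θ
    rcases le_or_gt R₀ s with h | h
    · exact S.apos s ⟨h, hs.2⟩ θ
    · have hper : Function.Periodic (S.a s) (2 * π) := fun t => S.periodic_a s t
      obtain ⟨θ', hθ', hval⟩ := hper.exists_mem_Ico (by positivity) θ 0
      rw [hval]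
      have hmem : ((s, θ') : ℝ × ℝ) ∈
          Metric.thickening δ₀ (({R₀} : Set ℝ) ×ˢ Set.Icc (0:ℝ) (2 * π)) := by
        rw [Metric.mem_thickening_iff]
        refine ⟨(R₀, θ'), ⟨rfl, ⟨hθ'.1, ?_⟩⟩, ?_⟩
        · have := hθ'.2; simpa using this.le
        · rw [Prod.dist_eq]
          simp only [dist_self]
          have h2 : dist s R₀ < δ₀ := by
            rw [Real.dist_eq, abs_of_nonpos (by linarith)]
            have : δ ≤ δ₀ / 2 := min_le_left _ _
            have := hs.1
            linarith
          simp [h2, hδ₀, max_lt_iff]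
      exact hthick hmem

lemma integral_EDv_nonpos (hR₀ : 0 < R₀) (S : ArealSol (Set.Ico R₀ Rs) K)
    {x : ℝ} (hx : x ∈ Set.Ico R₀ Rs) : ∫ θ in (0:ℝ)..(2 * π), EDv S.U S.A S.a x θ ≤ 0 := by
  have hx0 : 0 < x := lt_of_lt_of_le hR₀ hx.1
  set NP := fun θ : ℝ => -(K ^ 2 * Real.exp (2 * S.η x θ) / (2 * x ^ 3)) * Edens S.U S.A S.a x θ
    - 2 / x * ((S.a x θ)⁻¹ * pd1 S.U x θ ^ 2
        + Real.exp (4 * S.U x θ) / (4 * x ^ 2) * S.a x θ * pd2 S.A x θ ^ 2) with hNP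
  have hid : ∀ θ, EDv S.U S.A S.a x θ = W2v S.U S.A S.a x θ + NP θ := fun θ =>
    EDv_identity S.smooth_U S.smooth_A S.smooth_a hx0 (S.apos x hx θ)
      (S.eq_U x hx θ) (S.eq_A x hx θ) (S.eq_a x hx θ)
  rw [intervalIntegral.integral_congr (g := fun θ => W2v S.U S.A S.a x θ + NP θ)
    (fun θ _ => hid θ)]
  -- continuity of NP
  have c0 : Continuous fun θ => S.a x θ := (slice2_contDiff S.smooth_a x).continuous
  have cbi : Continuous fun θ => (S.a x θ)⁻¹ := c0.inv₀ (fun θ => (S.apos x hx θ).ne')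
  have cu1 : Continuous fun θ => pd1 S.U x θ :=
    (slice2_contDiff (contDiff_pd1 S.smooth_U) x).continuous
  have cp2 : Continuous fun θ => pd2 S.A x θ :=
    (slice2_contDiff (contDiff_pd2 S.smooth_A) x).continuous
  have cexpU : Continuous fun θ => Real.exp (4 * S.U x θ) :=
    Real.continuous_exp.comp (continuous_const.mul (slice2_contDiff S.smooth_U x).continuous)
  have cexp2 : Continuous fun θ => Real.exp (2 * S.η x θ) :=
    Real.continuous_exp.comp (continuous_const.mul (slice2_contDiff S.smooth_η x).continuous)
  have hNPcont : Continuous NP := by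
    rw [hNP]
    exact ((((continuous_const.mul cexp2).div_const (2 * x ^ 3)).neg).mul
        (cont_Edens_slice S.smooth_U S.smooth_A S.smooth_a (fun θ => (S.apos x hx θ).ne'))).sub
      (continuous_const.mul ((cbi.mul (cu1.pow 2)).add
        (((cexpU.div_const (4 * x ^ 2)).mul c0).mul (cp2.pow 2))))
  rw [intervalIntegral.integral_add
    ((cont_W2v_slice S.smooth_U S.smooth_A S.smooth_a x).intervalIntegrable 0 (2 * π))
    (hNPcont.intervalIntegrable 0 (2 * π)),
    integral_W2v_zero S.smooth_U S.smooth_A S.smooth_a S.periodic_U S.periodic_A S.periodic_a x,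
    zero_add]
  have hNPle : ∀ u ∈ Set.Icc (0:ℝ) (2 * π), NP u ≤ 0 := by
    intro u _
    have hb := S.apos x hx u
    have hE0 : 0 ≤ Edens S.U S.A S.a x u := Edens_nonneg hb
    have hc1 : (0:ℝ) ≤ K ^ 2 * Real.exp (2 * S.η x u) / (2 * x ^ 3) := by positivity
    have hinner : (0:ℝ) ≤ (S.a x u)⁻¹ * pd1 S.U x u ^ 2
        + Real.exp (4 * S.U x u) / (4 * x ^ 2) * S.a x u * pd2 S.A x u ^ 2 :=
      add_nonneg (mul_nonneg (inv_nonneg.2 hb.le) (sq_nonneg _))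
        (mul_nonneg (mul_nonneg (div_nonneg (Real.exp_nonneg _) (by positivity)) hb.le)
          (sq_nonneg _))
    have hc2 : (0:ℝ) ≤ 2 / x := by positivity
    rw [hNP]
    have h1 := mul_nonneg hc1 hE0
    have h2 := mul_nonneg hc2 hinner
    nlinarith
  have hnn : (0:ℝ) ≤ ∫ u in (0:ℝ)..(2 * π), -(NP u) :=
    intervalIntegral.integral_nonneg (by positivity) (fun u hu => neg_nonneg.2 (hNPle u hu))
  rw [intervalIntegral.integral_neg] at hnn
  linarith

lemma integral_EDMD_nonpos (hR₀ : 0 < R₀) (S : ArealSol (Set.Ico R₀ Rs) K)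
    {x : ℝ} (hx : x ∈ Set.Ico R₀ Rs) :
    ∫ θ in (0:ℝ)..(2 * π), (EDv S.U S.A S.a x θ + MDv K S.η S.a x θ) ≤ 0 := by
  have hx0 : 0 < x := lt_of_lt_of_le hR₀ hx.1
  set NP := fun θ : ℝ => -(2 / x) * ((S.a x θ)⁻¹ * pd1 S.U x θ ^ 2
        + Real.exp (4 * S.U x θ) / (4 * x ^ 2) * S.a x θ * pd2 S.A x θ ^ 2)
    - 4 / x * (K ^ 2 / (4 * x ^ 4) * Real.exp (2 * S.η x θ) * (S.a x θ)⁻¹) with hNP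
  have hid : ∀ θ, EDv S.U S.A S.a x θ + MDv K S.η S.a x θ
      = W2v S.U S.A S.a x θ + NP θ := by
    intro θ
    have h1 := EDv_identity (η := S.η) (K := K) S.smooth_U S.smooth_A S.smooth_a hx0
      (S.apos x hx θ) (S.eq_U x hx θ) (S.eq_A x hx θ) (S.eq_a x hx θ)
    have h2 := MDv_identity S.smooth_η S.smooth_a hx0 (S.apos x hx θ)
      (S.eq_ηR x hx θ) (S.eq_a x hx θ)
    rw [hNP]
    linarith
  rw [intervalIntegral.integral_congr (g := fun θ => W2v S.U S.A S.a x θ + NP θ)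
    (fun θ _ => hid θ)]
  have c0 : Continuous fun θ => S.a x θ := (slice2_contDiff S.smooth_a x).continuous
  have cbi : Continuous fun θ => (S.a x θ)⁻¹ := c0.inv₀ (fun θ => (S.apos x hx θ).ne')
  have cu1 : Continuous fun θ => pd1 S.U x θ :=
    (slice2_contDiff (contDiff_pd1 S.smooth_U) x).continuous
  have cp2 : Continuous fun θ => pd2 S.A x θ :=
    (slice2_contDiff (contDiff_pd2 S.smooth_A) x).continuous
  have cexpU : Continuous fun θ => Real.exp (4 * S.U x θ) :=
    Real.continuous_exp.comp (continuous_const.mul (slice2_contDiff S.smooth_U x).continuous)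
  have cexp2 : Continuous fun θ => Real.exp (2 * S.η x θ) :=
    Real.continuous_exp.comp (continuous_const.mul (slice2_contDiff S.smooth_η x).continuous)
  have hNPcont : Continuous NP := by
    rw [hNP]
    exact (continuous_const.mul ((cbi.mul (cu1.pow 2)).add
        (((cexpU.div_const (4 * x ^ 2)).mul c0).mul (cp2.pow 2)))).sub
      (continuous_const.mul (((continuous_const.mul cexp2)).mul cbi))
  rw [intervalIntegral.integral_add
    ((cont_W2v_slice S.smooth_U S.smooth_A S.smooth_a x).intervalIntegrable 0 (2 * π))
    (hNPcont.intervalIntegrable 0 (2 * π)),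
    integral_W2v_zero S.smooth_U S.smooth_A S.smooth_a S.periodic_U S.periodic_A S.periodic_a x,
    zero_add]
  have hNPle : ∀ u ∈ Set.Icc (0:ℝ) (2 * π), NP u ≤ 0 := by
    intro u _
    have hb := S.apos x hx u
    have hinner : (0:ℝ) ≤ (S.a x u)⁻¹ * pd1 S.U x u ^ 2
        + Real.exp (4 * S.U x u) / (4 * x ^ 2) * S.a x u * pd2 S.A x u ^ 2 :=
      add_nonneg (mul_nonneg (inv_nonneg.2 hb.le) (sq_nonneg _))
        (mul_nonneg (mul_nonneg (div_nonneg (Real.exp_nonneg _) (by positivity)) hb.le)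
          (sq_nonneg _))
    have hmu : (0:ℝ) ≤ K ^ 2 / (4 * x ^ 4) * Real.exp (2 * S.η x u) * (S.a x u)⁻¹ :=
      mul_nonneg (mul_nonneg (by positivity) (Real.exp_nonneg _)) (inv_nonneg.2 hb.le)
    have hc2 : (0:ℝ) ≤ 2 / x := by positivity
    have hc4 : (0:ℝ) ≤ 4 / x := by positivity
    rw [hNP]
    have h2 := mul_nonneg hc2 hinner
    have h4 := mul_nonneg hc4 hmu
    nlinarith
  have hnn : (0:ℝ) ≤ ∫ u in (0:ℝ)..(2 * π), -(NP u) :=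
    intervalIntegral.integral_nonneg (by positivity) (fun u hu => neg_nonneg.2 (hNPle u hu))
  rw [intervalIntegral.integral_neg] at hnn
  linarith

end Sol
section Sol2
open Function MeasureTheory intervalIntegral

variable {R₀ Rs K : ℝ}

lemma master (hR₀ : 0 < R₀) (hRs : R₀ < Rs) (S : ArealSol (Set.Ico R₀ Rs) K) :
    ∃ Ω : Set ℝ, IsOpen Ω ∧ Set.Ico R₀ Rs ⊆ Ω ∧
      (∀ s ∈ Ω, 0 < s) ∧ (∀ s ∈ Ω, ∀ θ, 0 < S.a s θ) ∧
      (∀ x ∈ Ω, HasDerivAt (fun y => ∫ θ' in (0:ℝ)..(2 * π), S.η y θ')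
        (∫ θ' in (0:ℝ)..(2 * π), pd1 S.η x θ') x) ∧
      (∀ r ∈ Set.Ico R₀ Rs, En S.U S.A S.a r ≤ En S.U S.A S.a R₀) ∧
      (∀ r ∈ Set.Ico R₀ Rs, EnK K S.U S.A S.η S.a r ≤ EnK K S.U S.A S.η S.a R₀) := by
  obtain ⟨Ω, hΩo, hsub, hIio, hpos, hapos⟩ := exists_shell hR₀ hRs S
  have hm : ∀ x ∈ Ω, HasDerivAt (fun y => ∫ θ' in (0:ℝ)..(2 * π), S.η y θ')
      (∫ θ' in (0:ℝ)..(2 * π), pd1 S.η x θ') x := by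
    intro x hx
    exact hasDerivAt_param_integral S.η (pd1 S.η) hΩo hx
      (fun y _ => (slice2_contDiff S.smooth_η y).continuous)
      ((cont2 (contDiff_pd1 S.smooth_η)).continuousOn)
      (fun y _ θ => hasDerivAt_pd1 S.smooth_η y θ)
  have hEn : ∀ x ∈ Ω, HasDerivAt (En S.U S.A S.a)
      (∫ θ in (0:ℝ)..(2 * π), EDv S.U S.A S.a x θ) x := by
    intro x hx
    exact hasDerivAt_param_integral (fun y θ => Edens S.U S.A S.a y θ) (EDv S.U S.A S.a) hΩo hx
      (fun y hy => cont_Edens_slice S.smooth_U S.smooth_A S.smooth_a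
        (fun θ => (hapos y hy θ).ne'))
      (contOn_EDv S.smooth_U S.smooth_A S.smooth_a
        (fun p hp => (hpos p.1 hp.1).ne') (fun p hp => (hapos p.1 hp.1 p.2).ne'))
      (fun y hy θ => hasDerivAt_Edens_raw S.smooth_U S.smooth_A S.smooth_a
        (hpos y hy).ne' (hapos y hy θ).ne')
  have hEnK : ∀ x ∈ Ω, HasDerivAt (EnK K S.U S.A S.η S.a)
      (∫ θ in (0:ℝ)..(2 * π), (EDv S.U S.A S.a x θ + MDv K S.η S.a x θ)) x := by
    intro x hx
    exact hasDerivAt_param_integral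
      (fun y θ => Edens S.U S.A S.a y θ + K ^ 2 / (4 * y ^ 4) * Real.exp (2 * S.η y θ) * (S.a y θ)⁻¹)
      (fun y θ => EDv S.U S.A S.a y θ + MDv K S.η S.a y θ) hΩo hx
      (fun y hy => cont_EnKdens_slice S.smooth_U S.smooth_A S.smooth_a S.smooth_η
        (fun θ => (hapos y hy θ).ne'))
      ((contOn_EDv S.smooth_U S.smooth_A S.smooth_a
          (fun p hp => (hpos p.1 hp.1).ne') (fun p hp => (hapos p.1 hp.1 p.2).ne')).add
        (contOn_MDv S.smooth_η S.smooth_a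
          (fun p hp => (hpos p.1 hp.1).ne') (fun p hp => (hapos p.1 hp.1 p.2).ne')))
      (fun y hy θ => (hasDerivAt_Edens_raw S.smooth_U S.smooth_A S.smooth_a
          (hpos y hy).ne' (hapos y hy θ).ne').add
        (hasDerivAt_MU S.smooth_η S.smooth_a (hpos y hy).ne' (hapos y hy θ).ne'))
  have mono : ∀ (f g : ℝ → ℝ), (∀ x ∈ Ω, HasDerivAt f (g x) x) →
      (∀ x ∈ Set.Ico R₀ Rs, g x ≤ 0) → ∀ r ∈ Set.Ico R₀ Rs, f r ≤ f R₀ := by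
    intro f g hf hg r hr
    have hIccΩ : Set.Icc R₀ r ⊆ Ω := fun y hy =>
      hsub ⟨hy.1, lt_of_le_of_lt hy.2 hr.2⟩
    have hanti : AntitoneOn f (Set.Icc R₀ r) := by
      apply antitoneOn_of_deriv_nonpos (convex_Icc _ _)
      · exact fun y hy => ((hf y (hIccΩ hy)).continuousAt).continuousWithinAt
      · intro y hy
        rw [interior_Icc] at hy
        exact ((hf y (hIccΩ (Set.Ioo_subset_Icc_self hy))).differentiableAt).differentiableWithinAt
      · intro y hy
        rw [interior_Icc] at hy
        rw [(hf y (hIccΩ (Set.Ioo_subset_Icc_self hy))).deriv]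
        exact hg y ⟨hy.1.le, lt_of_lt_of_le hy.2 hr.2.le⟩
    exact hanti (Set.left_mem_Icc.2 hr.1) ⟨hr.1, le_rfl⟩ hr.1
  exact ⟨Ω, hΩo, hsub, hpos, hapos, hm,
    mono _ _ hEn (fun x hx => integral_EDv_nonpos hR₀ S hx),
    mono _ _ hEnK (fun x hx => integral_EDMD_nonpos hR₀ S hx)⟩

end Sol2
section Fin
open Function MeasureTheory intervalIntegral

lemma amgm1 {b x y : ℝ} (hb : 0 < b) : |2 * x * y| ≤ b⁻¹ * x ^ 2 + b * y ^ 2 := by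
  have hbb := mul_inv_cancel₀ hb.ne'
  have hbi := inv_pos.2 hb
  rw [abs_le]
  constructor <;> nlinarith [sq_nonneg (x - b * y), sq_nonneg (x + b * y), sq_nonneg x,
    sq_nonneg y, mul_pos hb hbi]

lemma absF_le_E {U A a : ℝ → ℝ → ℝ} {r θ : ℝ} (hb : 0 < a r θ) :
    |Fdens U A r θ| ≤ Edens U A a r θ := by
  simp only [Fdens, Edens]
  have h1 := amgm1 (x := pd1 U r θ) (y := pd2 U r θ) hb
  have h2 := amgm1 (x := pd1 A r θ) (y := pd2 A r θ) hb
  have he : (0:ℝ) ≤ Real.exp (4 * U r θ) / (4 * r ^ 2) := by positivity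
  have habs := abs_add_le (2 * pd1 U r θ * pd2 U r θ)
    (Real.exp (4 * U r θ) / (2 * r ^ 2) * (pd1 A r θ * pd2 A r θ))
  have heq : |Real.exp (4 * U r θ) / (2 * r ^ 2) * (pd1 A r θ * pd2 A r θ)|
      = Real.exp (4 * U r θ) / (4 * r ^ 2) * |2 * pd1 A r θ * pd2 A r θ| := by
    rw [show Real.exp (4 * U r θ) / (2 * r ^ 2) * (pd1 A r θ * pd2 A r θ)
      = Real.exp (4 * U r θ) / (4 * r ^ 2) * (2 * pd1 A r θ * pd2 A r θ) by ring,
      abs_mul, abs_of_nonneg he]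
  have h2' := mul_le_mul_of_nonneg_left h2 he
  linarith

variable {R₀ Rs K : ℝ}

lemma eta1_bound (hR₀ : 0 < R₀) (S : ArealSol (Set.Ico R₀ Rs) K) {r θ : ℝ}
    (hr : r ∈ Set.Ico R₀ Rs) :
    |pd1 S.η r θ| * (S.a r θ)⁻¹
        ≤ r * (Edens S.U S.A S.a r θ + K ^ 2 / (4 * r ^ 4) * Real.exp (2 * S.η r θ) * (S.a r θ)⁻¹)
      ∧ |pd1 S.η r θ|
        ≤ S.a r θ * (r * (Edens S.U S.A S.a r θ
            + K ^ 2 / (4 * r ^ 4) * Real.exp (2 * S.η r θ) * (S.a r θ)⁻¹)) := by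
  have hb := S.apos r hr θ
  have hr0 : 0 < r := lt_of_lt_of_le hR₀ hr.1
  have heq := S.eq_ηR r hr θ
  have hE := Edens_nonneg (U := S.U) (A := S.A) hb
  have hmu0 : (0:ℝ) ≤ K ^ 2 / (4 * r ^ 4) * Real.exp (2 * S.η r θ) * (S.a r θ)⁻¹ :=
    mul_nonneg (mul_nonneg (by positivity) (Real.exp_nonneg _)) (inv_nonneg.2 hb.le)
  have hkey : r * (K ^ 2 / (4 * r ^ 4) * Real.exp (2 * S.η r θ) * (S.a r θ)⁻¹) * S.a r θ
      = K ^ 2 / (4 * r ^ 3) * Real.exp (2 * S.η r θ) := by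
    field_simp
  have hX : pd1 S.η r θ = S.a r θ * r * Edens S.U S.A S.a r θ
      - r * (K ^ 2 / (4 * r ^ 4) * Real.exp (2 * S.η r θ) * (S.a r θ)⁻¹) * S.a r θ := by
    linear_combination heq + hkey
  have hrE := mul_nonneg (mul_nonneg hb.le hr0.le) hE
  have hrmu := mul_nonneg (mul_nonneg hr0.le hmu0) hb.le
  have bound1 : |pd1 S.η r θ| ≤ S.a r θ * (r * (Edens S.U S.A S.a r θ
      + K ^ 2 / (4 * r ^ 4) * Real.exp (2 * S.η r θ) * (S.a r θ)⁻¹)) := by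
    rw [hX, abs_le]
    constructor <;> nlinarith
  refine ⟨?_, bound1⟩
  have h2 := mul_le_mul_of_nonneg_right bound1 (inv_nonneg.2 hb.le)
  calc |pd1 S.η r θ| * (S.a r θ)⁻¹
      ≤ S.a r θ * (r * (Edens S.U S.A S.a r θ
          + K ^ 2 / (4 * r ^ 4) * Real.exp (2 * S.η r θ) * (S.a r θ)⁻¹)) * (S.a r θ)⁻¹ := h2
    _ = r * (Edens S.U S.A S.a r θ
          + K ^ 2 / (4 * r ^ 4) * Real.exp (2 * S.η r θ) * (S.a r θ)⁻¹) := by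
        field_simp

lemma a_decr (hR₀ : 0 < R₀) (hRs : R₀ < Rs) (S : ArealSol (Set.Ico R₀ Rs) K) :
    ∀ r ∈ Set.Ico R₀ Rs, ∀ θ : ℝ, S.a r θ ≤ S.a R₀ θ := by
  intro r hr θ
  have hIcc : Set.Icc R₀ r ⊆ Set.Ico R₀ Rs := fun y hy => ⟨hy.1, lt_of_le_of_lt hy.2 hr.2⟩
  have hanti : AntitoneOn (fun s => Real.log (S.a s θ)) (Set.Icc R₀ r) := by
    apply antitoneOn_of_deriv_nonpos (convex_Icc _ _)
    · exact ContinuousOn.log (slice1_contDiff S.smooth_a θ).continuous.continuousOn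
        (fun x hx => (S.apos x (hIcc hx) θ).ne')
    · intro y hy
      rw [interior_Icc] at hy
      exact ((hasDerivAt_pd1 S.smooth_a y θ).log
        (S.apos y (hIcc (Set.Ioo_subset_Icc_self hy)) θ).ne').differentiableAt.differentiableWithinAt
    · intro y hy
      rw [interior_Icc] at hy
      have hyD : y ∈ Set.Ico R₀ Rs := hIcc (Set.Ioo_subset_Icc_self hy)
      have hd := (hasDerivAt_pd1 S.smooth_a y θ).log (S.apos y hyD θ).ne'
      have he := S.eq_a y hyD θ
      rw [expand_loga S.smooth_a (S.apos y hyD θ).ne'] at he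
      rw [hd.deriv, he]
      have hy0 : 0 < y := lt_of_lt_of_le hR₀ hyD.1
      apply div_nonpos_of_nonpos_of_nonneg
      · have : (0:ℝ) ≤ K ^ 2 * Real.exp (2 * S.η y θ) := by positivity
        linarith
      · positivity
  have hlog := hanti (Set.left_mem_Icc.2 hr.1) ⟨hr.1, le_rfl⟩ hr.1
  have h1 := S.apos R₀ ⟨le_rfl, hRs⟩ θ
  have h2 := S.apos r hr θ
  calc S.a r θ = Real.exp (Real.log (S.a r θ)) := (Real.exp_log h2).symm
    _ ≤ Real.exp (Real.log (S.a R₀ θ)) := Real.exp_le_exp.2 hlog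
    _ = S.a R₀ θ := Real.exp_log h1

end Fin
set_option maxHeartbeats 1000000 in
/-- **Estimates for the metric coefficient `η`.**
For a smooth areal solution on `[R₀,R*)`:
(i) `(1/R) ∫ |η_R| a⁻¹ dθ ≤ 𝓔_K(R₀)`; (ii) `(1/R) ∫ |η_θ| dθ ≤ 𝓔(R₀)`; and
(iii) `|η(R,θ)| ≤ R 𝓔(R₀) + |∫ η(R₀,·)| + (sup a(R₀,·))((R² − R₀²)/2) 𝓔_K(R₀)`. -/
theorem areal_eta_estimates
    (R₀ Rs K : ℝ) (hR₀ : 0 < R₀) (hRs : R₀ < Rs)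
    (S : ArealSol (Set.Ico R₀ Rs) K) :
    ∀ r ∈ Set.Ico R₀ Rs,
      ((1 / r) * (∫ θ in (0:ℝ)..(2 * Real.pi), |pd1 S.η r θ| * (S.a r θ)⁻¹)
          ≤ EnK K S.U S.A S.η S.a R₀) ∧
      ((1 / r) * (∫ θ in (0:ℝ)..(2 * Real.pi), |pd2 S.η r θ|)
          ≤ En S.U S.A S.a R₀) ∧
      (∀ θ : ℝ,
        |S.η r θ| ≤ r * En S.U S.A S.a R₀
          + |∫ θ' in (0:ℝ)..(2 * Real.pi), S.η R₀ θ'|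
          + (⨆ θ' : ℝ, S.a R₀ θ') * ((r ^ 2 - R₀ ^ 2) / 2)
              * EnK K S.U S.A S.η S.a R₀) := by
  obtain ⟨Ω, hΩo, hsub, hpos, hapos, hm, hEnmono, hEnKmono⟩ := master hR₀ hRs S
  have hR₀D : R₀ ∈ Set.Ico R₀ Rs := ⟨le_rfl, hRs⟩
  have hEn0 : 0 ≤ En S.U S.A S.a R₀ := by
    simp only [En]
    exact intervalIntegral.integral_nonneg (by positivity)
      (fun u _ => Edens_nonneg (S.apos R₀ hR₀D u))
  have hEnK0 : 0 ≤ EnK K S.U S.A S.η S.a R₀ := by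
    simp only [EnK]
    refine intervalIntegral.integral_nonneg (by positivity) (fun u _ => ?_)
    exact add_nonneg (Edens_nonneg (S.apos R₀ hR₀D u))
      (mul_nonneg (mul_nonneg (by positivity) (Real.exp_nonneg _))
        (inv_nonneg.2 (S.apos R₀ hR₀D u).le))
  -- the supremum of a(R₀, ·)
  have hperA : Function.Periodic (S.a R₀) (2 * π) := fun t => S.periodic_a R₀ t
  have hBdd : BddAbove (Set.range (S.a R₀)) := by
    rw [← hperA.image_uIcc (by positivity) 0]
    exact (isCompact_uIcc.image (slice2_contDiff S.smooth_a R₀).continuous).bddAbove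
  have hle_sup : ∀ θ : ℝ, S.a R₀ θ ≤ ⨆ θ' : ℝ, S.a R₀ θ' := fun θ => le_ciSup hBdd θ
  have hsup0 : 0 ≤ ⨆ θ' : ℝ, S.a R₀ θ' := le_trans (S.apos R₀ hR₀D 0).le (hle_sup 0)
  intro r hr
  have hr0 : 0 < r := lt_of_lt_of_le hR₀ hr.1
  have hbne : ∀ θ, S.a r θ ≠ 0 := fun θ => (S.apos r hr θ).ne'
  have cη1 : Continuous fun θ => pd1 S.η r θ :=
    (slice2_contDiff (contDiff_pd1 S.smooth_η) r).continuous
  have cη2 : Continuous fun θ => pd2 S.η r θ :=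
    (slice2_contDiff (contDiff_pd2 S.smooth_η) r).continuous
  have cbi : Continuous fun θ => (S.a r θ)⁻¹ :=
    (slice2_contDiff S.smooth_a r).continuous.inv₀ hbne
  have cdensK : Continuous fun θ => Edens S.U S.A S.a r θ
      + K ^ 2 / (4 * r ^ 4) * Real.exp (2 * S.η r θ) * (S.a r θ)⁻¹ :=
    cont_EnKdens_slice S.smooth_U S.smooth_A S.smooth_a S.smooth_η hbne
  have cdens : Continuous fun θ => Edens S.U S.A S.a r θ :=
    cont_Edens_slice S.smooth_U S.smooth_A S.smooth_a hbne
  -- part (i)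
  have hI : (∫ θ in (0:ℝ)..(2 * π), |pd1 S.η r θ| * (S.a r θ)⁻¹)
      ≤ r * EnK K S.U S.A S.η S.a r := by
    have h1 : (∫ θ in (0:ℝ)..(2 * π), |pd1 S.η r θ| * (S.a r θ)⁻¹)
        ≤ ∫ θ in (0:ℝ)..(2 * π), r * (Edens S.U S.A S.a r θ
            + K ^ 2 / (4 * r ^ 4) * Real.exp (2 * S.η r θ) * (S.a r θ)⁻¹) :=
      intervalIntegral.integral_mono_on (by positivity)
        ((cη1.abs.mul cbi).intervalIntegrable 0 (2 * π))
        ((continuous_const.mul cdensK).intervalIntegrable 0 (2 * π))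
        (fun θ _ => (eta1_bound hR₀ S hr).1)
    rw [intervalIntegral.integral_const_mul] at h1
    exact h1
  have part1 : (1 / r) * (∫ θ in (0:ℝ)..(2 * π), |pd1 S.η r θ| * (S.a r θ)⁻¹)
      ≤ EnK K S.U S.A S.η S.a R₀ := by
    have h2 := mul_le_mul_of_nonneg_left hI (by positivity : (0:ℝ) ≤ 1 / r)
    have h3 : (1 / r) * (r * EnK K S.U S.A S.η S.a r) = EnK K S.U S.A S.η S.a r := by
      field_simp
    rw [h3] at h2
    exact le_trans h2 (hEnKmono r hr)
  -- part (ii)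
  have hJle : (∫ θ in (0:ℝ)..(2 * π), |pd2 S.η r θ|) ≤ r * En S.U S.A S.a r := by
    have h1 : (∫ θ in (0:ℝ)..(2 * π), |pd2 S.η r θ|)
        ≤ ∫ θ in (0:ℝ)..(2 * π), r * Edens S.U S.A S.a r θ := by
      refine intervalIntegral.integral_mono_on (by positivity)
        (cη2.abs.intervalIntegrable 0 (2 * π))
        ((continuous_const.mul cdens).intervalIntegrable 0 (2 * π)) (fun θ _ => ?_)
      rw [S.eq_ηθ r hr θ, abs_mul, abs_of_pos hr0]
      exact mul_le_mul_of_nonneg_left (absF_le_E (S.apos r hr θ)) hr0.le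
    rw [intervalIntegral.integral_const_mul] at h1
    exact h1
  have hJleR : (∫ θ in (0:ℝ)..(2 * π), |pd2 S.η r θ|) ≤ r * En S.U S.A S.a R₀ :=
    le_trans hJle (mul_le_mul_of_nonneg_left (hEnmono r hr) hr0.le)
  have part2 : (1 / r) * (∫ θ in (0:ℝ)..(2 * π), |pd2 S.η r θ|) ≤ En S.U S.A S.a R₀ := by
    have h2 := mul_le_mul_of_nonneg_left hJleR (by positivity : (0:ℝ) ≤ 1 / r)
    have h3 : (1 / r) * (r * En S.U S.A S.a R₀) = En S.U S.A S.a R₀ := by field_simp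
    rw [h3] at h2
    exact h2
  refine ⟨part1, part2, ?_⟩
  -- part (iii)
  intro θ
  set m : ℝ → ℝ := fun y => ∫ θ' in (0:ℝ)..(2 * π), S.η y θ' with hmdef
  set supA : ℝ := ⨆ θ' : ℝ, S.a R₀ θ' with hsupdef
  set EnR : ℝ := En S.U S.A S.a R₀ with hEnRdef
  set EnKR : ℝ := EnK K S.U S.A S.η S.a R₀ with hEnKRdef
  set C : ℝ := supA * EnKR with hCdef
  have hC0 : 0 ≤ C := mul_nonneg hsup0 hEnK0
  have hIccΩ : Set.Icc R₀ r ⊆ Ω := fun y hy => hsub ⟨hy.1, lt_of_le_of_lt hy.2 hr.2⟩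
  -- bound on the derivative of m
  have hmb : ∀ x ∈ Set.Ico R₀ Rs, |∫ θ' in (0:ℝ)..(2 * π), pd1 S.η x θ'| ≤ C * x := by
    intro x hx
    have hx0 : 0 < x := lt_of_lt_of_le hR₀ hx.1
    have hbnex : ∀ θ', S.a x θ' ≠ 0 := fun θ' => (S.apos x hx θ').ne'
    have cdensKx : Continuous fun θ' => Edens S.U S.A S.a x θ'
        + K ^ 2 / (4 * x ^ 4) * Real.exp (2 * S.η x θ') * (S.a x θ')⁻¹ :=
      cont_EnKdens_slice S.smooth_U S.smooth_A S.smooth_a S.smooth_η hbnex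
    have cη1x : Continuous fun θ' => pd1 S.η x θ' :=
      (slice2_contDiff (contDiff_pd1 S.smooth_η) x).continuous
    have hpt : ∀ θ' ∈ Set.Icc (0:ℝ) (2 * π), |pd1 S.η x θ'|
        ≤ (supA * x) * (Edens S.U S.A S.a x θ'
            + K ^ 2 / (4 * x ^ 4) * Real.exp (2 * S.η x θ') * (S.a x θ')⁻¹) := by
      intro θ' _
      have hb1 := (eta1_bound hR₀ S hx (θ := θ')).2
      have hdens0 : 0 ≤ Edens S.U S.A S.a x θ'
          + K ^ 2 / (4 * x ^ 4) * Real.exp (2 * S.η x θ') * (S.a x θ')⁻¹ :=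
        add_nonneg (Edens_nonneg (S.apos x hx θ'))
          (mul_nonneg (mul_nonneg (by positivity) (Real.exp_nonneg _))
            (inv_nonneg.2 (S.apos x hx θ').le))
      have hax : S.a x θ' ≤ supA := le_trans (a_decr hR₀ hRs S x hx θ') (hle_sup θ')
      have h2 := mul_le_mul_of_nonneg_right hax (mul_nonneg hx0.le hdens0)
      calc |pd1 S.η x θ'| ≤ S.a x θ' * (x * (Edens S.U S.A S.a x θ'
            + K ^ 2 / (4 * x ^ 4) * Real.exp (2 * S.η x θ') * (S.a x θ')⁻¹)) := hb1
        _ ≤ supA * (x * (Edens S.U S.A S.a x θ'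
            + K ^ 2 / (4 * x ^ 4) * Real.exp (2 * S.η x θ') * (S.a x θ')⁻¹)) := h2
        _ = (supA * x) * (Edens S.U S.A S.a x θ'
            + K ^ 2 / (4 * x ^ 4) * Real.exp (2 * S.η x θ') * (S.a x θ')⁻¹) := by ring
    have h1 : |∫ θ' in (0:ℝ)..(2 * π), pd1 S.η x θ'|
        ≤ |(∫ θ' in (0:ℝ)..(2 * π), |pd1 S.η x θ'|)| := by
      simpa [Real.norm_eq_abs] using
        intervalIntegral.norm_integral_le_abs_integral_norm
          (f := fun θ' => pd1 S.η x θ') (a := (0:ℝ)) (b := 2 * π) (μ := MeasureTheory.volume)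
    have h2 : (0:ℝ) ≤ ∫ θ' in (0:ℝ)..(2 * π), |pd1 S.η x θ'| :=
      intervalIntegral.integral_nonneg (by positivity) (fun u _ => abs_nonneg _)
    have h3 : (∫ θ' in (0:ℝ)..(2 * π), |pd1 S.η x θ'|)
        ≤ ∫ θ' in (0:ℝ)..(2 * π), (supA * x) * (Edens S.U S.A S.a x θ'
            + K ^ 2 / (4 * x ^ 4) * Real.exp (2 * S.η x θ') * (S.a x θ')⁻¹) :=
      intervalIntegral.integral_mono_on (by positivity)
        (cη1x.abs.intervalIntegrable 0 (2 * π))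
        ((continuous_const.mul cdensKx).intervalIntegrable 0 (2 * π)) hpt
    rw [intervalIntegral.integral_const_mul] at h3
    have h4 : (supA * x) * EnK K S.U S.A S.η S.a x ≤ (supA * x) * EnKR :=
      mul_le_mul_of_nonneg_left (hEnKmono x hx) (mul_nonneg hsup0 hx0.le)
    have h5 : (supA * x) * EnKR = C * x := by rw [hCdef]; ring
    rw [abs_of_nonneg h2] at h1
    calc |∫ θ' in (0:ℝ)..(2 * π), pd1 S.η x θ'|
        ≤ ∫ θ' in (0:ℝ)..(2 * π), |pd1 S.η x θ'| := h1
      _ ≤ (supA * x) * EnK K S.U S.A S.η S.a x := h3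
      _ ≤ (supA * x) * EnKR := h4
      _ = C * x := h5
  -- |m r - m R₀| ≤ C (r² - R₀²)/2  via two monotone auxiliary functions
  have hCq : ∀ y : ℝ, HasDerivAt (fun z => C * (z ^ 2 / 2)) (C * y) y := by
    intro y
    have h := ((hasDerivAt_pow 2 y).div_const 2).const_mul C
    refine h.congr_deriv ?_
    push_cast
    ring
  have hmono_aux : ∀ σ : ℝ, σ = 1 ∨ σ = -1 →
      AntitoneOn (fun y => σ * m y - C * (y ^ 2 / 2)) (Set.Icc R₀ r) := by
    intro σ hσ
    apply antitoneOn_of_deriv_nonpos (convex_Icc _ _)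
    · intro y hy
      exact ((((hm y (hIccΩ hy)).const_mul σ).sub (hCq y)).continuousAt).continuousWithinAt
    · intro y hy
      rw [interior_Icc] at hy
      exact (((hm y (hIccΩ (Set.Ioo_subset_Icc_self hy))).const_mul σ).sub
        (hCq y)).differentiableAt.differentiableWithinAt
    · intro y hy
      rw [interior_Icc] at hy
      have hyD : y ∈ Set.Ico R₀ Rs := ⟨hy.1.le, lt_trans hy.2 hr.2⟩
      rw [show deriv (fun y => σ * m y - C * (y ^ 2 / 2)) y = _ from (((hm y (hIccΩ (Set.Ioo_subset_Icc_self hy))).const_mul σ).sub (hCq y)).deriv]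
      have hb := hmb y hyD
      have h1 := le_abs_self (∫ θ' in (0:ℝ)..(2 * π), pd1 S.η y θ')
      have h2 := neg_abs_le (∫ θ' in (0:ℝ)..(2 * π), pd1 S.η y θ')
      rcases hσ with h | h <;> rw [h] <;> nlinarith
  have hd1 : m r - m R₀ ≤ C * ((r ^ 2 - R₀ ^ 2) / 2) := by
    have h := hmono_aux 1 (Or.inl rfl) (Set.left_mem_Icc.2 hr.1) ⟨hr.1, le_rfl⟩ hr.1
    simp only [one_mul] at h
    nlinarith
  have hd2 : m R₀ - m r ≤ C * ((r ^ 2 - R₀ ^ 2) / 2) := by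
    have h := hmono_aux (-1) (Or.inr rfl) (Set.left_mem_Icc.2 hr.1) ⟨hr.1, le_rfl⟩ hr.1
    nlinarith
  have hQ0 : 0 ≤ C * ((r ^ 2 - R₀ ^ 2) / 2) := by
    have : R₀ ^ 2 ≤ r ^ 2 := by nlinarith [hr.1]
    have h2 : (0:ℝ) ≤ (r ^ 2 - R₀ ^ 2) / 2 := by linarith
    exact mul_nonneg hC0 h2
  have hmr : |m r| ≤ |m R₀| + C * ((r ^ 2 - R₀ ^ 2) / 2) := by
    rw [abs_le]
    constructor
    · have := neg_abs_le (m R₀)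
      linarith
    · have := le_abs_self (m R₀)
      linarith
  -- reduce θ to a period and use the mean value over a period
  have hperη : Function.Periodic (S.η r) (2 * π) := fun t => S.periodic_η r t
  obtain ⟨θb, hθb, hθeq⟩ := hperη.exists_mem_Ico (by positivity) θ 0
  have hθb' : θb ∈ Set.Icc (0:ℝ) (2 * π) := by
    refine ⟨hθb.1, ?_⟩
    have := hθb.2
    simp only [zero_add] at this
    exact this.le
  set J : ℝ := ∫ θ' in (0:ℝ)..(2 * π), |pd2 S.η r θ'| with hJdef
  have hJ0 : 0 ≤ J :=
    intervalIntegral.integral_nonneg (by positivity) (fun u _ => abs_nonneg _)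
  have hFTC : ∀ t1 t2 : ℝ, (∫ t in t1..t2, pd2 S.η r t) = S.η r t2 - S.η r t1 := fun t1 t2 =>
    intervalIntegral.integral_eq_sub_of_hasDerivAt
      (fun t _ => hasDerivAt_pd2 S.smooth_η r t) (cη2.intervalIntegrable t1 t2)
  have hdiff : ∀ θ' ∈ Set.Icc (0:ℝ) (2 * π), |S.η r θb - S.η r θ'| ≤ J := by
    intro θ' hθ'
    rcases le_total θ' θb with hc | hc
    · have h1 : |∫ t in θ'..θb, pd2 S.η r t| ≤ |(∫ t in θ'..θb, |pd2 S.η r t|)| := by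
        simpa [Real.norm_eq_abs] using
          intervalIntegral.norm_integral_le_abs_integral_norm
            (f := fun t => pd2 S.η r t) (a := θ') (b := θb) (μ := MeasureTheory.volume)
      have h2 : (∫ t in θ'..θb, |pd2 S.η r t|) ≤ J :=
        intervalIntegral.integral_mono_interval hθ'.1 hc hθb'.2
          (Filter.Eventually.of_forall (fun t => abs_nonneg _))
          (cη2.abs.intervalIntegrable 0 (2 * π))
      have h3 : (0:ℝ) ≤ ∫ t in θ'..θb, |pd2 S.η r t| :=
        intervalIntegral.integral_nonneg hc (fun _ _ => abs_nonneg _)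
      rw [abs_of_nonneg h3] at h1
      rw [← hFTC θ' θb]
      linarith
    · have h1 : |∫ t in θb..θ', pd2 S.η r t| ≤ |(∫ t in θb..θ', |pd2 S.η r t|)| := by
        simpa [Real.norm_eq_abs] using
          intervalIntegral.norm_integral_le_abs_integral_norm
            (f := fun t => pd2 S.η r t) (a := θb) (b := θ') (μ := MeasureTheory.volume)
      have h2 : (∫ t in θb..θ', |pd2 S.η r t|) ≤ J :=
        intervalIntegral.integral_mono_interval hθb'.1 hc hθ'.2
          (Filter.Eventually.of_forall (fun t => abs_nonneg _))
          (cη2.abs.intervalIntegrable 0 (2 * π))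
      have h3 : (0:ℝ) ≤ ∫ t in θb..θ', |pd2 S.η r t| :=
        intervalIntegral.integral_nonneg hc (fun _ _ => abs_nonneg _)
      rw [abs_of_nonneg h3] at h1
      rw [abs_sub_comm, ← hFTC θb θ']
      linarith
  have hsubi : (∫ θ' in (0:ℝ)..(2 * π), (S.η r θb - S.η r θ')) = 2 * π * S.η r θb - m r := by
    rw [intervalIntegral.integral_sub intervalIntegrable_const
      ((slice2_contDiff S.smooth_η r).continuous.intervalIntegrable 0 (2 * π)),
      intervalIntegral.integral_const]
    rw [hmdef]
    simp [smul_eq_mul]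
  have hmean : |2 * π * S.η r θb - m r| ≤ 2 * π * J := by
    rw [← hsubi]
    have hbound := intervalIntegral.norm_integral_le_of_norm_le
      (f := fun θ' => S.η r θb - S.η r θ') (g := fun _ => J) (μ := MeasureTheory.volume)
      (a := (0:ℝ)) (b := 2 * π) (by positivity)
      (by
        refine Filter.Eventually.of_forall (fun t ht => ?_)
        rw [Real.norm_eq_abs]
        exact hdiff t ⟨ht.1.le, ht.2⟩)
      intervalIntegrable_const
    have hconst : (∫ _ in (0:ℝ)..(2 * π), J) = 2 * π * J := by
      rw [intervalIntegral.integral_const]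
      simp [smul_eq_mul]
    rw [hconst] at hbound
    simpa [Real.norm_eq_abs] using hbound
  -- final assembly
  have hπ1 : (1:ℝ) ≤ 2 * π := by nlinarith [Real.pi_gt_three]
  have ht1 : 2 * π * |S.η r θb| ≤ 2 * π * J + |m r| := by
    have htri : |2 * π * S.η r θb| ≤ |2 * π * S.η r θb - m r| + |m r| := by
      have := abs_add_le (2 * π * S.η r θb - m r) (m r)
      simpa using this
    rw [abs_mul, abs_of_pos (by positivity : (0:ℝ) < 2 * π)] at htri
    linarith
  have hJr : J ≤ r * EnR := hJleR
  have hstep : 2 * π * |S.η r θb| ≤ 2 * π * (J + (|m R₀| + C * ((r ^ 2 - R₀ ^ 2) / 2))) := by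
    nlinarith [abs_nonneg (m R₀), hQ0, hπ1, ht1, hmr]
  have hfin : |S.η r θb| ≤ J + (|m R₀| + C * ((r ^ 2 - R₀ ^ 2) / 2)) :=
    le_of_mul_le_mul_left (by linarith [hstep]) (by positivity : (0:ℝ) < 2 * π)
  have hCeq : C * ((r ^ 2 - R₀ ^ 2) / 2) = supA * ((r ^ 2 - R₀ ^ 2) / 2) * EnKR := by
    rw [hCdef]; ring
  rw [hθeq]
  calc |S.η r θb| ≤ J + (|m R₀| + C * ((r ^ 2 - R₀ ^ 2) / 2)) := hfin
    _ ≤ r * EnR + (|m R₀| + C * ((r ^ 2 - R₀ ^ 2) / 2)) := by linarith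
    _ = r * EnR + |m R₀| + supA * ((r ^ 2 - R₀ ^ 2) / 2) * EnKR := by rw [hCeq]; ring
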